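/- arXiv:1707.06386 — 3 statements merged into one kernel-verified Lean document; each statement's English description precedes it below -/
import Mathlib

section
/- Assume (H1), (H2), (H3) and (H4)(2), and let γ ∈ (0, 2/L). For any Lipschitz function φ : ℝ^d → ℝ with Lipschitz constant L_φ, for every θ ∈ ℝ^d and every k ≥ 1, |R_γ^k φ(θ) − π_γ(φ)| ≤ L_φ · (1 − 2μγ(1 − γL/2))^{k/2} · (∫_{ℝ^d} ‖θ − ϑ‖² dπ_γ(ϑ))^{1/2}. -/
open MeasureTheory ProbabilityTheory Filter Finset
open scoped ENNReal NNReal RealInnerProductSpace Topology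

noncomputable section

namespace SGDFormal

/-- The state space `ℝ^d`. -/
abbrev Vec (d : ℕ) := EuclideanSpace ℝ (Fin d)

variable {d q : ℕ} {Ω : Type*} [MeasurableSpace Ω]

/-- The outer product `v wᵀ` as a continuous linear map, `(v wᵀ) x = ⟪w, x⟫ v`. -/
def outer (v : Vec q) (w : Vec d) : Vec d →L[ℝ] Vec q :=
  (innerSL ℝ w).smulRight v

/-- The SGD iterates `θ_k^{(γ)}`, started at the deterministic point `θ0`:
`θ_{k+1} = θ_k - γ (f'(θ_k) + ε_{k+1}(θ_k))`. -/
def sgd (f' : Vec d → Vec d) (ε : ℕ → Vec d → Ω → Vec d) (γ : ℝ) (θ0 : Vec d) :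
    ℕ → Ω → Vec d
  | 0 => fun _ => θ0
  | k + 1 => fun ω =>
      sgd f' ε γ θ0 k ω - γ • (f' (sgd f' ε γ θ0 k ω) + ε (k + 1) (sgd f' ε γ θ0 k ω) ω)

/-- The one-step Markov kernel of SGD: `R_γ(θ, ·)` is the law of `θ - γ(f'(θ) + ε_1(θ))`. -/
def Rstep (P : Measure Ω) (f' : Vec d → Vec d) (ε : ℕ → Vec d → Ω → Vec d) (γ : ℝ)
    (θ : Vec d) : Measure (Vec d) :=
  P.map fun ω => θ - γ • (f' θ + ε 1 θ ω)

/-- The `k`-step kernel `R_γ^k`. -/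
def Riter (P : Measure Ω) (f' : Vec d → Vec d) (ε : ℕ → Vec d → Ω → Vec d) (γ : ℝ) :
    ℕ → Vec d → Measure (Vec d)
  | 0 => fun θ => Measure.dirac θ
  | k + 1 => fun θ => (Riter P f' ε γ k θ).bind (Rstep P f' ε γ)

/-- `π` is a stationary (invariant) probability measure for the kernel `R_γ`. -/
def IsStationary (P : Measure Ω) (f' : Vec d → Vec d) (ε : ℕ → Vec d → Ω → Vec d)
    (γ : ℝ) (π : Measure (Vec d)) : Prop :=
  π.bind (Rstep P f' ε γ) = π

/-- `π` has a finite second moment. -/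
def FiniteSecondMoment (π : Measure (Vec d)) : Prop :=
  ∫⁻ θ, (‖θ‖₊ : ℝ≥0∞) ^ 2 ∂π < ⊤

/-- Squared Wasserstein distance of order 2 (as an infimum over couplings). -/
def W2sq (μ ν : Measure (Vec d)) : ℝ :=
  sInf {r : ℝ | ∃ ξ : Measure (Vec d × Vec d), IsProbabilityMeasure ξ ∧
    ξ.map Prod.fst = μ ∧ ξ.map Prod.snd = ν ∧ r = ∫ p, ‖p.1 - p.2‖ ^ 2 ∂ξ}

/-- Poisson solution `ψ_γ(θ) = Σ_{i=0}^∞ (R_γ^i φ(θ) − π(φ))`. -/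
def poisson {F : Type*} [NormedAddCommGroup F] [NormedSpace ℝ F]
    (P : Measure Ω) (f' : Vec d → Vec d) (ε : ℕ → Vec d → Ω → Vec d) (γ : ℝ)
    (π : Measure (Vec d)) (φ : Vec d → F) (θ : Vec d) : F :=
  ∑' i : ℕ, (∫ ϑ, φ ϑ ∂(Riter P f' ε γ i θ) - ∫ ϑ, φ ϑ ∂π)

/-- Noise covariance `C(θ) = E[ε_1(θ)^{⊗2}]`. -/
def noiseCov (P : Measure Ω) (ε : ℕ → Vec d → Ω → Vec d) (θ : Vec d) :
    Vec d →L[ℝ] Vec d :=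
  ∫ ω, outer (ε 1 θ ω) (ε 1 θ ω) ∂P

/-- (H1): `f` is strongly convex with constant `m`. -/
def StrongConvexC (f : Vec d → ℝ) (m : ℝ) : Prop :=
  ∀ θ₁ θ₂ : Vec d, ∀ t : ℝ, t ∈ Set.Icc (0 : ℝ) 1 →
    f (t • θ₁ + (1 - t) • θ₂) ≤
      t * f θ₁ + (1 - t) * f θ₂ - m / 2 * (t * (1 - t)) * ‖θ₁ - θ₂‖ ^ 2

/-- (H2): `f` is `C^5`, with bounded 2nd–5th derivatives; `f'` is the gradient of `f`
and is `L`-Lipschitz. -/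
def H2 (f : Vec d → ℝ) (f' : Vec d → Vec d) (L : ℝ) : Prop :=
  ContDiff ℝ 5 f ∧ (∀ θ, HasGradientAt f (f' θ) θ) ∧
    (∀ i : ℕ, 2 ≤ i → i ≤ 5 → ∃ B : ℝ, ∀ θ, ‖iteratedFDeriv ℝ i f θ‖ ≤ B) ∧
    ∀ θ₁ θ₂ : Vec d, ‖f' θ₁ - f' θ₂‖ ≤ L * ‖θ₁ - θ₂‖

/-- `θstar` is a (the) global minimizer of `f`. -/
def IsMinimizer (f : Vec d → ℝ) (θstar : Vec d) : Prop :=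
  ∀ θ, f θstar ≤ f θ

/-- (H3): `(ℱ_k)` is a filtration, `ε_{k+1}(θ)` is `ℱ_{k+1}`-measurable with zero conditional
expectation given `ℱ_k`, and the random fields `(ε_k)_{k ≥ 1}` are i.i.d. -/
def H3 (P : Measure Ω) (ℱ : ℕ → MeasurableSpace Ω) (ε : ℕ → Vec d → Ω → Vec d) : Prop :=
  (∀ k, ℱ k ≤ ℱ (k + 1)) ∧ (∀ k, ℱ k ≤ (inferInstance : MeasurableSpace Ω)) ∧
    (∀ (k : ℕ) (θ : Vec d), Measurable[ℱ (k + 1)] (ε (k + 1) θ)) ∧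
    (∀ (k : ℕ) (θ : Vec d), P[ε (k + 1) θ|ℱ k] =ᵐ[P] 0) ∧
    (iIndepFun (m := fun _ : ℕ => MeasurableSpace.pi)
      (fun (k : ℕ) (ω : Ω) (θ : Vec d) => ε (k + 1) θ ω) P) ∧
    ∀ j k : ℕ, IdentDistrib (fun (ω : Ω) (θ : Vec d) => ε (j + 1) θ ω)
      (fun (ω : Ω) (θ : Vec d) => ε (k + 1) θ ω) P P

/-- (H4)(p): a.s. `L`-co-coercivity of `f'_k = f' + ε_k` and a `p`-th moment bound `τ` on the
noise at the optimum. -/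
def H4 (P : Measure Ω) (f' : Vec d → Vec d) (ε : ℕ → Vec d → Ω → Vec d)
    (θstar : Vec d) (L : ℝ) (p : ℕ) (τ : ℝ) : Prop :=
  (∀ k : ℕ, 1 ≤ k → ∀ᵐ ω ∂P, ∀ θ η : Vec d,
      ‖(f' θ + ε k θ ω) - (f' η + ε k η ω)‖ ^ 2 ≤
        L * ⟪(f' θ + ε k θ ω) - (f' η + ε k η ω), θ - η⟫) ∧
    0 ≤ τ ∧ ∀ k : ℕ, 1 ≤ k →
      (∫⁻ ω, (‖ε k θstar ω‖₊ : ℝ≥0∞) ^ p ∂P) ≤ ENNReal.ofReal (τ ^ p)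

end SGDFormal

namespace SGDFormal

lemma grad_ineq {d : ℕ} {f : Vec d → ℝ} {f' : Vec d → Vec d} {m : ℝ}
    (h1 : StrongConvexC f m) (hg : ∀ θ, HasGradientAt f (f' θ) θ) (x y : Vec d) :
    ⟪f' x, y - x⟫ ≤ f y - f x - m / 2 * ‖x - y‖ ^ 2 := by
  have hc : ∀ s : ℝ, HasDerivAt (fun t : ℝ => x + t • (y - x)) (y - x) s := by
    intro s
    simpa using ((hasDerivAt_id s).smul_const (y - x)).const_add x
  have hD : HasDerivAt (fun t : ℝ => f (x + t • (y - x))) ⟪f' x, y - x⟫ 0 := by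
    have h0 : x + (0:ℝ) • (y - x) = x := by simp
    have hgx : HasFDerivAt f ((InnerProductSpace.toDual ℝ (Vec d)) (f' x)) (x + (0:ℝ) • (y - x)) := by
      rw [h0]; exact (hg x).hasFDerivAt
    have := hgx.comp_hasDerivAt 0 (hc 0)
    simpa [InnerProductSpace.toDual_apply_apply, Function.comp_def] using this
  have hslope : Tendsto (slope (fun t : ℝ => f (x + t • (y - x))) 0) (𝓝[>] 0)
      (𝓝 ⟪f' x, y - x⟫) := by
    have := hasDerivAt_iff_tendsto_slope.mp hD
    exact this.mono_left (nhdsWithin_mono 0 (fun s hs => ne_of_gt hs))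
  have hrhs : Tendsto (fun s : ℝ => f y - f x - m / 2 * (1 - s) * ‖x - y‖ ^ 2) (𝓝[>] 0)
      (𝓝 (f y - f x - m / 2 * ‖x - y‖ ^ 2)) := by
    have h : Tendsto (fun s : ℝ => f y - f x - m / 2 * (1 - s) * ‖x - y‖ ^ 2) (𝓝 0)
        (𝓝 (f y - f x - m / 2 * (1 - 0) * ‖x - y‖ ^ 2)) := by
      exact (tendsto_const_nhds.sub (((tendsto_const_nhds.sub tendsto_id).const_mul _).mul tendsto_const_nhds))
    simpa using h.mono_left nhdsWithin_le_nhds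
  refine le_of_tendsto_of_tendsto hslope hrhs ?_
  filter_upwards [Ioc_mem_nhdsGT_of_mem (Set.mem_Ico.mpr ⟨le_refl (0:ℝ), zero_lt_one⟩)]
    with s hs
  have hs0 : 0 < s := hs.1
  have key := h1 y x s ⟨hs0.le, hs.2⟩
  have hxy : x + s • (y - x) = s • y + (1 - s) • x := by module
  have hnorm : ‖y - x‖ = ‖x - y‖ := norm_sub_rev y x
  have hmain : f (x + s • (y - x)) - f x ≤ s * (f y - f x - m / 2 * (1 - s) * ‖x - y‖ ^ 2) := by
    rw [hxy]
    rw [hnorm] at key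
    nlinarith [key]
  show slope (fun t : ℝ => f (x + t • (y - x))) 0 s ≤ _
  rw [slope_def_field]
  rw [div_le_iff₀ (by simpa using hs0)]
  simp only [smul_eq_mul, sub_zero] at hmain ⊢
  simpa [zero_smul, add_zero, mul_comm] using hmain

lemma strong_mono {d : ℕ} {f : Vec d → ℝ} {f' : Vec d → Vec d} {m : ℝ}
    (h1 : StrongConvexC f m) (hg : ∀ θ, HasGradientAt f (f' θ) θ) (x y : Vec d) :
    m * ‖x - y‖ ^ 2 ≤ ⟪f' x - f' y, x - y⟫ := by
  have ha := grad_ineq h1 hg x y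
  have hb := grad_ineq h1 hg y x
  rw [norm_sub_rev] at hb
  have hsplit : ⟪f' x - f' y, x - y⟫ = -⟪f' x, y - x⟫ - ⟪f' y, x - y⟫ := by
    simp [inner_sub_left, inner_sub_right]; ring
  rw [hsplit]
  linarith

lemma norm_le_of_cocoercive {d : ℕ} {L : ℝ} (hL : 0 < L) {u a : Vec d}
    (h : ‖u‖ ^ 2 ≤ L * ⟪u, a⟫) : ‖u‖ ≤ L * ‖a‖ := by
  rcases eq_or_lt_of_le (norm_nonneg u) with h0 | h0
  · rw [← h0]; positivity
  · have hCS : ⟪u, a⟫ ≤ ‖u‖ * ‖a‖ := real_inner_le_norm u a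
    have : ‖u‖ ^ 2 ≤ L * (‖u‖ * ‖a‖) := le_trans h (by nlinarith)
    nlinarith

lemma continuous_of_lipbound {d q : ℕ} {g : Vec d → Vec q} {C : ℝ}
    (h : ∀ x y, ‖g x - g y‖ ≤ C * ‖x - y‖) : Continuous g := by
  have hlip : LipschitzWith C.toNNReal g := by
    refine LipschitzWith.of_dist_le_mul fun x y => ?_
    simp only [dist_eq_norm]
    exact le_trans (h x y)
      (mul_le_mul_of_nonneg_right (Real.le_coe_toNNReal C) (norm_nonneg _))
  exact hlip.continuous

lemma continuous_of_lipbound' {d : ℕ} {g : Vec d → ℝ} {C : ℝ}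
    (h : ∀ x y, |g x - g y| ≤ C * ‖x - y‖) : Continuous g := by
  have hlip : LipschitzWith C.toNNReal g := by
    refine LipschitzWith.of_dist_le_mul fun x y => ?_
    simp only [Real.dist_eq, dist_eq_norm]
    exact le_trans (h x y)
      (mul_le_mul_of_nonneg_right (Real.le_coe_toNNReal C) (norm_nonneg _))
  exact hlip.continuous

set_option maxHeartbeats 1000000 in
lemma coupling
    {d : ℕ} {Ω : Type*} [MeasurableSpace Ω]
    (P : Measure Ω) [IsProbabilityMeasure P] (ℱ : ℕ → MeasurableSpace Ω)
    (f : Vec d → ℝ) (f' : Vec d → Vec d) (ε : ℕ → Vec d → Ω → Vec d)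
    (θstar : Vec d) (m L τ : ℝ) (hm : 0 < m) (hL : 0 < L)
    (h1 : StrongConvexC f m) (h2 : H2 f f' L)
    (h3 : H3 P ℱ ε) (h4 : H4 P f' ε θstar L 2 τ)
    (γ : ℝ) (hγ : γ ∈ Set.Ioo (0 : ℝ) (2 / L))
    (hρ : 0 ≤ 1 - 2 * m * γ * (1 - γ * L / 2))
    (π : Measure (Vec d)) (hπ : IsProbabilityMeasure π)
    (hπstat : IsStationary P f' ε γ π) (θ : Vec d) (k : ℕ) :
    ∃ ξ : Measure (Vec d × Vec d), IsProbabilityMeasure ξ ∧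
      ξ.map Prod.fst = Riter P f' ε γ k θ ∧ ξ.map Prod.snd = π ∧
      ∫⁻ p, (‖p.1 - p.2‖₊ : ℝ≥0∞) ^ 2 ∂ξ ≤
        ENNReal.ofReal (1 - 2 * m * γ * (1 - γ * L / 2)) ^ k *
          ∫⁻ ϑ, (‖θ - ϑ‖₊ : ℝ≥0∞) ^ 2 ∂π := by
  classical
  have hγ0 : 0 < γ := hγ.1
  have hγ2 : γ * L < 2 := by
    have := hγ.2
    rw [lt_div_iff₀ hL] at this
    linarith
  have hεmeas : ∀ x : Vec d, Measurable (ε 1 x) :=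
    fun x => (h3.2.2.1 0 x).mono (h3.2.1 1) le_rfl
  -- the null set off which co-coercivity holds
  obtain ⟨N, hNsub, hNmeas, hNnull⟩ :
      ∃ N, {ω | ¬ ∀ x y : Vec d,
          ‖(f' x + ε 1 x ω) - (f' y + ε 1 y ω)‖ ^ 2 ≤
            L * ⟪(f' x + ε 1 x ω) - (f' y + ε 1 y ω), x - y⟫} ⊆ N ∧
        MeasurableSet N ∧ P N = 0 :=
    exists_measurable_superset_of_null (ae_iff.mp (h4.1 1 le_rfl))
  have hNae : ∀ᵐ ω ∂P, ω ∉ N := by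
    rw [ae_iff]
    simpa using hNnull
  set E : Vec d → Ω → Vec d := fun x ω => if ω ∈ N then 0 else ε 1 x ω with hE
  set G : Vec d → Ω → Vec d := fun x ω => f' x + E x ω with hG
  set T : Vec d → Ω → Vec d := fun x ω => x - γ • G x ω with hT
  have hEN : ∀ (x : Vec d) (ω : Ω), ω ∈ N → E x ω = 0 := by
    intro x ω h; simp only [hE]; exact if_pos h
  have hENc : ∀ (x : Vec d) (ω : Ω), ω ∉ N → E x ω = ε 1 x ω := by
    intro x ω h; simp only [hE]; exact if_neg h
  have hEmeas : ∀ x, Measurable (E x) :=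
    fun x => Measurable.ite hNmeas measurable_const (hεmeas x)
  have hco : ∀ ω, ω ∉ N → ∀ x y : Vec d,
      ‖G x ω - G y ω‖ ^ 2 ≤ L * ⟪G x ω - G y ω, x - y⟫ := by
    intro ω hω x y
    have hωgood : ∀ x y : Vec d,
        ‖(f' x + ε 1 x ω) - (f' y + ε 1 y ω)‖ ^ 2 ≤
          L * ⟪(f' x + ε 1 x ω) - (f' y + ε 1 y ω), x - y⟫ := by
      by_contra hcon
      exact hω (hNsub hcon)
    have ex : ∀ z : Vec d, G z ω = f' z + ε 1 z ω := by
      intro z; simp only [hG]; rw [hENc z ω hω]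
    rw [ex x, ex y]
    exact hωgood x y
  have hGLip : ∀ ω x y, ‖G x ω - G y ω‖ ≤ L * ‖x - y‖ := by
    intro ω x y
    by_cases hω : ω ∈ N
    · have ex : ∀ z : Vec d, G z ω = f' z := by
        intro z; simp only [hG]; rw [hEN z ω hω, add_zero]
      rw [ex x, ex y]
      exact h2.2.2.2 x y
    · exact norm_le_of_cocoercive hL (hco ω hω x y)
  have hEcont : ∀ ω, Continuous fun x => E x ω := by
    intro ω
    by_cases hω : ω ∈ N
    · have ex : (fun x => E x ω) = fun _ : Vec d => (0 : Vec d) := by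
        funext x; exact hEN x ω hω
      rw [ex]; exact continuous_const
    · have ex : (fun x => E x ω) = fun x => G x ω - f' x := by
        funext x
        simp only [hG]
        abel
      rw [ex]
      have hf'c : Continuous f' := continuous_of_lipbound h2.2.2.2
      have hGc : Continuous fun x => G x ω := continuous_of_lipbound (hGLip ω)
      exact hGc.sub hf'c
  have hTcont : ∀ ω, Continuous fun x => T x ω := by
    intro ω
    have : Continuous fun x => G x ω :=
      continuous_of_lipbound (hGLip ω)
    exact continuous_id.sub (this.const_smul γ)
  have hEum : Measurable (Function.uncurry E) :=
    measurable_uncurry_of_continuous_of_measurable hEcont hEmeas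
  have hf'meas : Measurable f' := (continuous_of_lipbound h2.2.2.2).measurable
  have hTum : Measurable (Function.uncurry T) := by
    have : Function.uncurry T = fun p : Vec d × Ω =>
        p.1 - γ • (f' p.1 + Function.uncurry E p) := rfl
    rw [this]
    exact measurable_fst.sub (((hf'meas.comp measurable_fst).add hEum).const_smul γ)
  have hTmeas : ∀ x, Measurable (T x) := fun x => hTum.comp measurable_prodMk_left
  have hRstep_eq : ∀ x, Rstep P f' ε γ x = P.map (T x) := by
    intro x
    refine Measure.map_congr ?_
    filter_upwards [hNae] with ω hω
    simp only [hT, hG]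
    rw [hENc x ω hω]
  have hRmeas : Measurable (Rstep P f' ε γ) := by
    refine Measure.measurable_of_measurable_coe _ fun s hs => ?_
    have : (fun x => Rstep P f' ε γ x s) = fun x => P (Prod.mk x ⁻¹' (Function.uncurry T ⁻¹' s)) := by
      funext x
      rw [hRstep_eq x, Measure.map_apply (hTmeas x) hs]
      rfl
    rw [this]
    exact measurable_measure_prodMk_left (hTum hs)
  have hbind : ∀ μ : Measure (Vec d), SFinite μ →
      μ.bind (Rstep P f' ε γ) = (μ.prod P).map (Function.uncurry T) := by
    intro μ hsf
    ext s hs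
    rw [Measure.bind_apply hs hRmeas.aemeasurable,
      Measure.map_apply hTum hs, Measure.prod_apply (hTum hs)]
    refine lintegral_congr fun x => ?_
    rw [hRstep_eq x, Measure.map_apply (hTmeas x) hs]
    rfl
  -- integrability and mean-zero of the modified noise
  have hEstar2 : ∫⁻ ω, (‖E θstar ω‖₊ : ℝ≥0∞) ^ 2 ∂P ≤ ENNReal.ofReal (τ ^ 2) := by
    refine le_trans (lintegral_mono fun ω => ?_) (h4.2.2 1 le_rfl)
    by_cases hω : ω ∈ N
    · rw [hEN _ _ hω]; simp
    · rw [hENc _ _ hω]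
  have hEstarInt : Integrable (E θstar) P := by
    refine ⟨(hEmeas θstar).aestronglyMeasurable, ?_⟩
    have hb : ∫⁻ ω, (‖E θstar ω‖₊ : ℝ≥0∞) ∂P ≤ ∫⁻ ω, 1 + (‖E θstar ω‖₊ : ℝ≥0∞) ^ 2 ∂P := by
      refine lintegral_mono fun ω => ?_
      rcases le_total ((‖E θstar ω‖₊ : ℝ≥0∞)) 1 with h | h
      · exact le_trans h le_self_add
      · exact le_trans (le_self_pow₀ h two_ne_zero) le_add_self
    have hfin : ∫⁻ ω, 1 + (‖E θstar ω‖₊ : ℝ≥0∞) ^ 2 ∂P < ⊤ := by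
      rw [lintegral_add_left measurable_const]
      simp only [lintegral_const, measure_univ, mul_one, one_mul]
      exact ENNReal.add_lt_top.mpr ⟨ENNReal.one_lt_top,
        lt_of_le_of_lt hEstar2 ENNReal.ofReal_lt_top⟩
    exact lt_of_le_of_lt hb hfin
  have hEdiff : ∀ (x : Vec d) (ω : Ω), ‖E x ω‖ ≤ ‖E θstar ω‖ + 2 * L * ‖x - θstar‖ := by
    intro x ω
    by_cases hω : ω ∈ N
    · rw [hEN _ _ hω]
      simp only [norm_zero]
      positivity
    · have hdd : ‖E x ω - E θstar ω‖ ≤ 2 * L * ‖x - θstar‖ := by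
        have ex : E x ω - E θstar ω = (G x ω - G θstar ω) - (f' x - f' θstar) := by
          simp only [hG]; abel
        rw [ex]
        have hg1 := hGLip ω x θstar
        have hg2 := h2.2.2.2 x θstar
        have := norm_sub_le (G x ω - G θstar ω) (f' x - f' θstar)
        linarith
      have hsum : E x ω = E θstar ω + (E x ω - E θstar ω) := by abel
      calc ‖E x ω‖ = ‖E θstar ω + (E x ω - E θstar ω)‖ := by rw [← hsum]
        _ ≤ ‖E θstar ω‖ + ‖E x ω - E θstar ω‖ := norm_add_le _ _
        _ ≤ ‖E θstar ω‖ + 2 * L * ‖x - θstar‖ := by linarith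
  have hEint : ∀ x : Vec d, Integrable (E x) P := by
    intro x
    refine Integrable.mono' (hEstarInt.norm.add (integrable_const (2 * L * ‖x - θstar‖)))
      (hEmeas x).aestronglyMeasurable (ae_of_all _ fun ω => hEdiff x ω)
  have hEzero : ∀ x : Vec d, ∫ ω, E x ω ∂P = 0 := by
    intro x
    have hεint : Integrable (ε 1 x) P := by
      refine (hEint x).congr ?_
      filter_upwards [hNae] with ω hω
      exact hENc x ω hω
    have heq : ∫ ω, E x ω ∂P = ∫ ω, ε 1 x ω ∂P := by
      refine integral_congr_ae ?_
      filter_upwards [hNae] with ω hω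
      exact hENc x ω hω
    haveI : SigmaFinite (P.trim (h3.2.1 0)) := by infer_instance
    rw [heq, ← integral_condExp (h3.2.1 0) (f := ε 1 x)]
    rw [integral_congr_ae (h3.2.2.2.1 0 x)]
    simp
  have hGxmeas : ∀ x : Vec d, Measurable (G x) := fun x => measurable_const.add (hEmeas x)
  have hGint : ∀ x : Vec d, Integrable (G x) P :=
    fun x => (integrable_const (f' x)).add (hEint x)
  have hGmean : ∀ x : Vec d, ∫ ω, G x ω ∂P = f' x := by
    intro x
    have : G x = fun ω => f' x + E x ω := rfl
    rw [this, integral_add (integrable_const _) (hEint x), integral_const, hEzero x]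
    simp [measure_univ]
  -- one-step contraction
  have hstep : ∀ x y : Vec d, ∫⁻ ω, (‖T x ω - T y ω‖₊ : ℝ≥0∞) ^ 2 ∂P ≤
      ENNReal.ofReal (1 - 2 * m * γ * (1 - γ * L / 2)) * (‖x - y‖₊ : ℝ≥0∞) ^ 2 := by
    intro x y
    have hbmeas : Measurable (fun ω => G x ω - G y ω) := (hGxmeas x).sub (hGxmeas y)
    have hbint : Integrable (fun ω => G x ω - G y ω) P := (hGint x).sub (hGint y)
    have hbnorm : ∀ ω, ‖G x ω - G y ω‖ ≤ L * ‖x - y‖ := fun ω => hGLip ω x y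
    have hbmean : ∫ ω, (G x ω - G y ω) ∂P = f' x - f' y := by
      rw [integral_sub (hGint x) (hGint y), hGmean, hGmean]
    have hTexp : ∀ ω, ‖T x ω - T y ω‖ ^ 2 =
        ‖x - y‖ ^ 2 - 2 * γ * ⟪G x ω - G y ω, x - y⟫ + γ ^ 2 * ‖G x ω - G y ω‖ ^ 2 := by
      intro ω
      have ht : T x ω - T y ω = (x - y) - γ • (G x ω - G y ω) := by
        simp only [hT]; module
      rw [ht, norm_sub_sq_real, real_inner_smul_right, norm_smul, Real.norm_eq_abs,
        abs_of_pos hγ0, mul_pow, real_inner_comm]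
      ring
    have hTbound : ∀ ω, ‖T x ω - T y ω‖ ≤ (1 + γ * L) * ‖x - y‖ := by
      intro ω
      have ht : T x ω - T y ω = (x - y) - γ • (G x ω - G y ω) := by
        simp only [hT]; module
      rw [ht]
      have h1' := norm_sub_le (x - y) (γ • (G x ω - G y ω))
      have h2' : ‖γ • (G x ω - G y ω)‖ = γ * ‖G x ω - G y ω‖ := by
        rw [norm_smul, Real.norm_eq_abs, abs_of_pos hγ0]
      have h3' := hbnorm ω
      nlinarith [norm_nonneg (G x ω - G y ω)]
    have hinner_int : Integrable (fun ω => ⟪G x ω - G y ω, x - y⟫) P := by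
      have h' : Integrable (fun ω => ⟪x - y, G x ω - G y ω⟫) P :=
        hbint.const_inner (x - y)
      refine h'.congr (ae_of_all _ fun ω => ?_)
      exact real_inner_comm _ _
    have hbn2_int : Integrable (fun ω => ‖G x ω - G y ω‖ ^ 2) P := by
      refine Integrable.mono' (integrable_const ((L * ‖x - y‖) ^ 2))
        ((continuous_pow 2).comp_aestronglyMeasurable hbmeas.norm.aestronglyMeasurable)
        (ae_of_all _ fun ω => ?_)
      rw [Real.norm_eq_abs, abs_of_nonneg (by positivity)]
      exact pow_le_pow_left₀ (norm_nonneg _) (hbnorm ω) 2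
    have hT2_int : Integrable (fun ω => ‖T x ω - T y ω‖ ^ 2) P := by
      refine Integrable.mono' (integrable_const (((1 + γ * L) * ‖x - y‖) ^ 2))
        ((continuous_pow 2).comp_aestronglyMeasurable
          (((hTmeas x).sub (hTmeas y)).norm.aestronglyMeasurable))
        (ae_of_all _ fun ω => ?_)
      rw [Real.norm_eq_abs, abs_of_nonneg (by positivity)]
      exact pow_le_pow_left₀ (norm_nonneg _) (hTbound ω) 2
    have hIineq : ∫ ω, ‖T x ω - T y ω‖ ^ 2 ∂P ≤
        (1 - 2 * m * γ * (1 - γ * L / 2)) * ‖x - y‖ ^ 2 := by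
      have hmono' := strong_mono h1 h2.2.1 x y
      have step1 : ∫ ω, ‖T x ω - T y ω‖ ^ 2 ∂P =
          ‖x - y‖ ^ 2 - 2 * γ * ∫ ω, ⟪G x ω - G y ω, x - y⟫ ∂P
            + γ ^ 2 * ∫ ω, ‖G x ω - G y ω‖ ^ 2 ∂P := by
        rw [integral_congr_ae (ae_of_all _ hTexp)]
        have int1 : Integrable (fun ω => ‖x - y‖ ^ 2 - 2 * γ * ⟪G x ω - G y ω, x - y⟫) P := by
          exact (integrable_const _).sub (hinner_int.const_mul (2 * γ))
        rw [integral_add int1 (hbn2_int.const_mul (γ ^ 2))]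
        rw [integral_sub (integrable_const _) (hinner_int.const_mul (2 * γ))]
        rw [integral_const_mul, integral_const_mul, integral_const]
        simp [measure_univ]
      have step2 : ∫ ω, ⟪G x ω - G y ω, x - y⟫ ∂P = ⟪f' x - f' y, x - y⟫ := by
        have hc : ∀ ω, ⟪G x ω - G y ω, x - y⟫ = ⟪x - y, G x ω - G y ω⟫ :=
          fun ω => real_inner_comm _ _
        rw [integral_congr_ae (ae_of_all _ hc), integral_inner hbint, hbmean,
          real_inner_comm]
      have step3 : ∫ ω, ‖G x ω - G y ω‖ ^ 2 ∂P ≤ L * ⟪f' x - f' y, x - y⟫ := by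
        rw [← step2, ← integral_const_mul]
        refine integral_mono_ae hbn2_int (hinner_int.const_mul L) ?_
        filter_upwards [hNae] with ω hω
        exact hco ω hω x y
      rw [step1, step2]
      have hcoeff : 0 ≤ γ * (2 - γ * L) := by nlinarith
      have key : γ * (2 - γ * L) * (m * ‖x - y‖ ^ 2) ≤
          γ * (2 - γ * L) * ⟪f' x - f' y, x - y⟫ :=
        mul_le_mul_of_nonneg_left hmono' hcoeff
      have key2 : γ ^ 2 * ∫ ω, ‖G x ω - G y ω‖ ^ 2 ∂P ≤
          γ ^ 2 * (L * ⟪f' x - f' y, x - y⟫) :=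
        mul_le_mul_of_nonneg_left step3 (sq_nonneg γ)
      nlinarith [key, key2]
    calc ∫⁻ ω, (‖T x ω - T y ω‖₊ : ℝ≥0∞) ^ 2 ∂P
        = ENNReal.ofReal (∫ ω, ‖T x ω - T y ω‖ ^ 2 ∂P) := by
          rw [ofReal_integral_eq_lintegral_ofReal hT2_int
            (ae_of_all _ fun ω => by positivity)]
          refine lintegral_congr fun ω => ?_
          rw [ENNReal.ofReal_pow (norm_nonneg _), ofReal_norm, enorm_eq_nnnorm]
      _ ≤ ENNReal.ofReal ((1 - 2 * m * γ * (1 - γ * L / 2)) * ‖x - y‖ ^ 2) :=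
          ENNReal.ofReal_le_ofReal hIineq
      _ = ENNReal.ofReal (1 - 2 * m * γ * (1 - γ * L / 2)) * (‖x - y‖₊ : ℝ≥0∞) ^ 2 := by
          rw [ENNReal.ofReal_mul hρ, ENNReal.ofReal_pow (norm_nonneg _),
            ofReal_norm, enorm_eq_nnnorm]
  -- measurability of the cost function
  have hcostmeas : Measurable fun p : Vec d × Vec d => (‖p.1 - p.2‖₊ : ℝ≥0∞) ^ 2 :=
    ((measurable_fst.sub measurable_snd).nnnorm.coe_nnreal_ennreal).pow_const 2
  -- the inductive construction of the coupling
  induction k with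
  | zero =>
    have hmk : Measurable fun ϑ : Vec d => (θ, ϑ) := measurable_const.prodMk measurable_id
    refine ⟨π.map (fun ϑ => (θ, ϑ)), ?_, ?_, ?_, ?_⟩
    · exact Measure.isProbabilityMeasure_map hmk.aemeasurable
    · rw [Measure.map_map measurable_fst hmk]
      have hcomp : (Prod.fst ∘ fun ϑ : Vec d => (θ, ϑ)) = fun _ => θ := rfl
      rw [hcomp]
      simp [Riter, Measure.map_const, measure_univ]
    · rw [Measure.map_map measurable_snd hmk]
      simp [Measure.map_id]
    · rw [lintegral_map hcostmeas hmk]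
      simp
  | succ k IH =>
    obtain ⟨ξ, hξprob, hfst, hsnd, hcost⟩ := IH
    haveI := hξprob
    have hΦmeas : Measurable fun p : (Vec d × Vec d) × Ω => (T p.1.1 p.2, T p.1.2 p.2) := by
      refine Measurable.prodMk ?_ ?_
      · exact hTum.comp ((measurable_fst.comp measurable_fst).prodMk measurable_snd)
      · exact hTum.comp ((measurable_snd.comp measurable_fst).prodMk measurable_snd)
    refine ⟨(ξ.prod P).map (fun p => (T p.1.1 p.2, T p.1.2 p.2)),
      Measure.isProbabilityMeasure_map hΦmeas.aemeasurable, ?_, ?_, ?_⟩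
    · rw [Measure.map_map measurable_fst hΦmeas]
      have h1' : Riter P f' ε γ (k + 1) θ = (Riter P f' ε γ k θ).bind (Rstep P f' ε γ) := by
        simp [Riter]
      rw [h1', ← hfst]
      haveI : IsProbabilityMeasure (ξ.map Prod.fst) :=
        Measure.isProbabilityMeasure_map measurable_fst.aemeasurable
      rw [hbind _ inferInstance]
      have h2' : (ξ.map Prod.fst).prod P = (ξ.prod P).map (Prod.map Prod.fst id) := by
        have h3' := Measure.map_prod_map ξ P measurable_fst measurable_id
        rwa [Measure.map_id] at h3'
      rw [h2', Measure.map_map hTum (measurable_fst.prodMap measurable_id)]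
      rfl
    · rw [Measure.map_map measurable_snd hΦmeas]
      haveI : IsProbabilityMeasure (ξ.map Prod.snd) :=
        Measure.isProbabilityMeasure_map measurable_snd.aemeasurable
      have hkey : (ξ.map Prod.snd).bind (Rstep P f' ε γ) =
          (ξ.prod P).map (Prod.snd ∘ fun p : (Vec d × Vec d) × Ω => (T p.1.1 p.2, T p.1.2 p.2)) := by
        rw [hbind _ inferInstance]
        have h2' : (ξ.map Prod.snd).prod P = (ξ.prod P).map (Prod.map Prod.snd id) := by
          have h3' := Measure.map_prod_map ξ P measurable_snd measurable_id
          rwa [Measure.map_id] at h3'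
        rw [h2', Measure.map_map hTum (measurable_snd.prodMap measurable_id)]
        rfl
      rw [← hkey, hsnd]
      exact hπstat
    · rw [lintegral_map hcostmeas hΦmeas]
      have hjm : Measurable fun z : (Vec d × Vec d) × Ω =>
          (‖T z.1.1 z.2 - T z.1.2 z.2‖₊ : ℝ≥0∞) ^ 2 := by
        have m1 : Measurable fun z : (Vec d × Vec d) × Ω => T z.1.1 z.2 :=
          hTum.comp ((measurable_fst.comp measurable_fst).prodMk measurable_snd)
        have m2 : Measurable fun z : (Vec d × Vec d) × Ω => T z.1.2 z.2 :=
          hTum.comp ((measurable_snd.comp measurable_fst).prodMk measurable_snd)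
        exact ((m1.sub m2).nnnorm.coe_nnreal_ennreal).pow_const 2
      calc ∫⁻ p, (‖T p.1.1 p.2 - T p.1.2 p.2‖₊ : ℝ≥0∞) ^ 2 ∂(ξ.prod P)
          = ∫⁻ q, ∫⁻ ω, (‖T q.1 ω - T q.2 ω‖₊ : ℝ≥0∞) ^ 2 ∂P ∂ξ :=
            MeasureTheory.lintegral_prod _ hjm.aemeasurable
        _ ≤ ∫⁻ q, ENNReal.ofReal (1 - 2 * m * γ * (1 - γ * L / 2)) *
              (‖q.1 - q.2‖₊ : ℝ≥0∞) ^ 2 ∂ξ := lintegral_mono fun q => hstep q.1 q.2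
        _ = ENNReal.ofReal (1 - 2 * m * γ * (1 - γ * L / 2)) *
              ∫⁻ q, (‖q.1 - q.2‖₊ : ℝ≥0∞) ^ 2 ∂ξ := lintegral_const_mul _ hcostmeas
        _ ≤ ENNReal.ofReal (1 - 2 * m * γ * (1 - γ * L / 2)) *
              (ENNReal.ofReal (1 - 2 * m * γ * (1 - γ * L / 2)) ^ k *
                ∫⁻ ϑ, (‖θ - ϑ‖₊ : ℝ≥0∞) ^ 2 ∂π) := mul_le_mul_right hcost _
        _ = ENNReal.ofReal (1 - 2 * m * γ * (1 - γ * L / 2)) ^ (k + 1) *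
              ∫⁻ ϑ, (‖θ - ϑ‖₊ : ℝ≥0∞) ^ 2 ∂π := by ring



/-- Proposition 2(b): geometric convergence of `R_γ^k φ` to `π_γ(φ)` for
Lipschitz `φ`. -/
theorem kernel_convergence_lipschitz
    {d : ℕ} {Ω : Type*} [MeasurableSpace Ω]
    (P : Measure Ω) [IsProbabilityMeasure P] (ℱ : ℕ → MeasurableSpace Ω)
    (f : Vec d → ℝ) (f' : Vec d → Vec d) (ε : ℕ → Vec d → Ω → Vec d)
    (θstar : Vec d) (m L τ : ℝ) (hm : 0 < m) (hL : 0 < L)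
    (h1 : StrongConvexC f m) (h2 : H2 f f' L) (hmin : IsMinimizer f θstar)
    (h3 : H3 P ℱ ε) (h4 : H4 P f' ε θstar L 2 τ)
    (γ : ℝ) (hγ : γ ∈ Set.Ioo (0 : ℝ) (2 / L))
    (π : Measure (Vec d)) (hπ : IsProbabilityMeasure π) (hπ2 : FiniteSecondMoment π)
    (hπstat : IsStationary P f' ε γ π)
    (φ : Vec d → ℝ) (Lφ : ℝ) (hφ : ∀ x y : Vec d, |φ x - φ y| ≤ Lφ * ‖x - y‖) :
    ∀ θ : Vec d, ∀ k : ℕ, 1 ≤ k →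
      |(∫ ϑ, φ ϑ ∂(Riter P f' ε γ k θ)) - ∫ ϑ, φ ϑ ∂π| ≤
        Lφ * Real.sqrt ((1 - 2 * m * γ * (1 - γ * L / 2)) ^ k) *
          Real.sqrt (∫ ϑ, ‖θ - ϑ‖ ^ 2 ∂π) := by
  intro θ k hk
  by_cases hd : d = 0
  · -- degenerate case: the state space is a single point
    subst hd
    haveI : Subsingleton (Vec 0) := ⟨fun a b => PiLp.ext fun i => Fin.elim0 i⟩
    have hRprob : ∀ x : Vec 0, IsProbabilityMeasure (Rstep P f' ε γ x) := fun x =>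
      Measure.isProbabilityMeasure_map (measurable_of_subsingleton_codomain _).aemeasurable
    have hiter : ∀ j, IsProbabilityMeasure (Riter P f' ε γ j θ) := by
      intro j
      induction j with
      | zero =>
        simp only [Riter]
        infer_instance
      | succ j IH =>
        constructor
        have heq : Riter P f' ε γ (j + 1) θ = (Riter P f' ε γ j θ).bind (Rstep P f' ε γ) := by
          simp [Riter]
        rw [heq, Measure.bind_apply MeasurableSet.univ Subsingleton.measurable.aemeasurable]
        have hone : ∀ x : Vec 0, Rstep P f' ε γ x Set.univ = 1 := fun x =>
          (hRprob x).measure_univ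
        simp only [hone]
        rw [lintegral_one, IH.measure_univ]
    have hconst : ∀ μ : Measure (Vec 0), IsProbabilityMeasure μ → ∫ ϑ, φ ϑ ∂μ = φ θ := by
      intro μ hμ
      have hφc : φ = fun _ => φ θ := funext fun z => by rw [Subsingleton.elim z θ]
      rw [hφc, integral_const, probReal_univ]
      simp
    have hzero : ∫ ϑ, ‖θ - ϑ‖ ^ 2 ∂π = 0 := by
      have hz : (fun ϑ : Vec 0 => ‖θ - ϑ‖ ^ 2) = fun _ => (0 : ℝ) := funext fun ϑ => by
        rw [Subsingleton.elim (θ - ϑ) (0 : Vec 0), norm_zero]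
        norm_num
      rw [hz, integral_zero]
    rw [hconst _ (hiter k), hconst _ hπ, hzero, Real.sqrt_zero, mul_zero, sub_self, abs_zero]
  · -- main case: d ≥ 1
    have hd1 : 0 < d := Nat.pos_of_ne_zero hd
    have hγ0 : 0 < γ := hγ.1
    have hγ2 : γ * L < 2 := by
      have := hγ.2
      rw [lt_div_iff₀ hL] at this
      linarith
    set u : Vec d := EuclideanSpace.single (⟨0, hd1⟩ : Fin d) (1 : ℝ) with hu_def
    have hu : ‖u‖ = 1 := by
      rw [hu_def, EuclideanSpace.norm_single]
      norm_num
    have hmL : m ≤ L := by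
      have h1' := strong_mono h1 h2.2.1 u 0
      have h2' := h2.2.2.2 u 0
      have h3' : ⟪f' u - f' 0, u - 0⟫ ≤ ‖f' u - f' 0‖ * ‖u - 0‖ := real_inner_le_norm _ _
      rw [sub_zero] at h1' h2' h3'
      rw [hu] at h1' h2' h3'
      nlinarith
    have hρ0 : 0 ≤ 1 - 2 * m * γ * (1 - γ * L / 2) := by
      nlinarith [sq_nonneg (1 - γ * L), mul_pos hγ0 hL]
    have hLφ0 : 0 ≤ Lφ := by
      have hb := hφ u 0
      rw [sub_zero, hu, mul_one] at hb
      have := abs_nonneg (φ u - φ 0)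
      linarith
    obtain ⟨ξ, hξprob, hfst, hsnd, hcost⟩ :=
      coupling P ℱ f f' ε θstar m L τ hm hL h1 h2 h3 h4 γ hγ hρ0 π hπ hπstat θ k
    haveI := hξprob
    -- finiteness of the relative second moment of π
    have hsq : ∀ a b : ℝ≥0∞, (a + b) ^ 2 ≤ 4 * (a ^ 2 + b ^ 2) := by
      intro a b
      have h1' : a + b ≤ 2 * max a b := by
        rw [two_mul]
        exact add_le_add (le_max_left a b) (le_max_right a b)
      have h2' : (a + b) ^ 2 ≤ (2 * max a b) ^ 2 := pow_le_pow_left' h1' 2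
      have h3' : (max a b) ^ 2 ≤ a ^ 2 + b ^ 2 := by
        rcases le_total a b with h | h
        · rw [max_eq_right h]; exact le_add_self
        · rw [max_eq_left h]; exact le_self_add
      calc (a + b) ^ 2 ≤ (2 * max a b) ^ 2 := h2'
        _ = 4 * (max a b) ^ 2 := by ring
        _ ≤ 4 * (a ^ 2 + b ^ 2) := mul_le_mul_right h3' 4
    have hM : (∫⁻ ϑ, (‖θ - ϑ‖₊ : ℝ≥0∞) ^ 2 ∂π) < ⊤ := by
      have hb : ∀ ϑ : Vec d, (‖θ - ϑ‖₊ : ℝ≥0∞) ^ 2 ≤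
          4 * (((‖θ‖₊ : ℝ≥0∞)) ^ 2 + ((‖ϑ‖₊ : ℝ≥0∞)) ^ 2) := by
        intro ϑ
        refine le_trans ?_ (hsq _ _)
        have : (‖θ - ϑ‖₊ : ℝ≥0∞) ≤ (‖θ‖₊ : ℝ≥0∞) + (‖ϑ‖₊ : ℝ≥0∞) := by
          exact_mod_cast nnnorm_sub_le θ ϑ
        exact pow_le_pow_left' this 2
      calc ∫⁻ ϑ, (‖θ - ϑ‖₊ : ℝ≥0∞) ^ 2 ∂π
          ≤ ∫⁻ ϑ, 4 * (((‖θ‖₊ : ℝ≥0∞)) ^ 2 + ((‖ϑ‖₊ : ℝ≥0∞)) ^ 2) ∂π := lintegral_mono hb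
        _ = 4 * ((‖θ‖₊ : ℝ≥0∞) ^ 2 * 1 + ∫⁻ ϑ, ((‖ϑ‖₊ : ℝ≥0∞)) ^ 2 ∂π) := by
            rw [lintegral_const_mul' _ _ (by norm_num), lintegral_add_left measurable_const,
              lintegral_const, measure_univ]
        _ < ⊤ := by
            refine ENNReal.mul_lt_top (by norm_num) ?_
            exact ENNReal.add_lt_top.mpr ⟨ENNReal.mul_lt_top
              (ENNReal.pow_lt_top ENNReal.coe_lt_top) ENNReal.one_lt_top, hπ2⟩
    have hBlt : ENNReal.ofReal (1 - 2 * m * γ * (1 - γ * L / 2)) ^ k *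
        (∫⁻ ϑ, (‖θ - ϑ‖₊ : ℝ≥0∞) ^ 2 ∂π) < ⊤ :=
      ENNReal.mul_lt_top (ENNReal.pow_lt_top ENNReal.ofReal_lt_top) hM
    have hcost_lt : ∫⁻ p, (‖p.1 - p.2‖₊ : ℝ≥0∞) ^ 2 ∂ξ < ⊤ := lt_of_le_of_lt hcost hBlt
    -- continuity of φ
    have hφc : Continuous φ := continuous_of_lipbound' hφ
    have hle1 : ∀ a : ℝ≥0∞, a ≤ 1 + a ^ 2 := by
      intro a
      rcases le_total a 1 with h | h
      · exact le_trans h le_self_add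
      · exact le_trans (le_self_pow₀ h two_ne_zero) le_add_self
    -- integrability of the coupled distance functions
    have hg1meas : Measurable fun p : Vec d × Vec d => ‖p.1 - p.2‖ :=
      (measurable_fst.sub measurable_snd).norm
    have hg1int : Integrable (fun p : Vec d × Vec d => ‖p.1 - p.2‖) ξ := by
      refine ⟨hg1meas.aestronglyMeasurable, ?_⟩
      have : ∫⁻ p, ‖(‖p.1 - p.2‖)‖₊ ∂ξ ≤ ∫⁻ p, 1 + (‖p.1 - p.2‖₊ : ℝ≥0∞) ^ 2 ∂ξ := by
        refine lintegral_mono fun p => ?_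
        rw [nnnorm_norm]
        exact hle1 _
      refine lt_of_le_of_lt this ?_
      rw [lintegral_add_left measurable_const, lintegral_const, measure_univ]
      exact ENNReal.add_lt_top.mpr ⟨by simp, hcost_lt⟩
    have hsnd2 : ∫⁻ p : Vec d × Vec d, (‖p.2 - θ‖₊ : ℝ≥0∞) ^ 2 ∂ξ =
        ∫⁻ ϑ, (‖θ - ϑ‖₊ : ℝ≥0∞) ^ 2 ∂π := by
      have hm2 : Measurable fun ϑ : Vec d => (‖ϑ - θ‖₊ : ℝ≥0∞) ^ 2 :=
        ((measurable_id.sub measurable_const).nnnorm.coe_nnreal_ennreal).pow_const 2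
      have hswap : ∫⁻ ϑ, (‖θ - ϑ‖₊ : ℝ≥0∞) ^ 2 ∂π = ∫⁻ ϑ, (‖ϑ - θ‖₊ : ℝ≥0∞) ^ 2 ∂π :=
        lintegral_congr fun ϑ => by rw [show (‖θ - ϑ‖₊ : ℝ≥0) = ‖ϑ - θ‖₊ from by rw [← neg_sub, nnnorm_neg]]
      rw [hswap, ← hsnd, lintegral_map hm2 measurable_snd]
    have hg2int : Integrable (fun p : Vec d × Vec d => ‖p.2 - θ‖) ξ := by
      refine ⟨((measurable_snd.sub measurable_const).norm).aestronglyMeasurable, ?_⟩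
      have hmono : ∫⁻ p, ‖(‖p.2 - θ‖)‖₊ ∂ξ ≤ ∫⁻ p, 1 + (‖p.2 - θ‖₊ : ℝ≥0∞) ^ 2 ∂ξ := by
        refine lintegral_mono fun p => ?_
        rw [nnnorm_norm]
        exact hle1 _
      refine lt_of_le_of_lt hmono ?_
      rw [lintegral_add_left measurable_const, lintegral_const, measure_univ, hsnd2]
      exact ENNReal.add_lt_top.mpr ⟨by simp, hM⟩
    have hdom : Integrable (fun p : Vec d × Vec d =>
        |φ θ| + Lφ * (‖p.1 - p.2‖ + ‖p.2 - θ‖)) ξ :=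
      (integrable_const _).add ((hg1int.add hg2int).const_mul Lφ)
    have hφbound : ∀ z : Vec d, |φ z| ≤ |φ θ| + Lφ * ‖z - θ‖ := by
      intro z
      have := hφ z θ
      have habs := abs_sub_abs_le_abs_sub (φ z) (φ θ)
      linarith
    have htri : ∀ p : Vec d × Vec d, ‖p.1 - θ‖ ≤ ‖p.1 - p.2‖ + ‖p.2 - θ‖ := by
      intro p
      have := dist_triangle p.1 p.2 θ
      simpa [dist_eq_norm] using this
    have hφ1 : Integrable (fun p : Vec d × Vec d => φ p.1) ξ := by
      refine Integrable.mono' hdom (hφc.comp continuous_fst).aestronglyMeasurable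
        (ae_of_all _ fun p => ?_)
      rw [Real.norm_eq_abs]
      have h1' := hφbound p.1
      have h2' := htri p
      nlinarith [hLφ0]
    have hφ2 : Integrable (fun p : Vec d × Vec d => φ p.2) ξ := by
      refine Integrable.mono' hdom (hφc.comp continuous_snd).aestronglyMeasurable
        (ae_of_all _ fun p => ?_)
      rw [Real.norm_eq_abs]
      have h1' := hφbound p.2
      have h2' : 0 ≤ Lφ * ‖p.1 - p.2‖ := by positivity
      nlinarith [hLφ0]
    -- rewrite the two integrals through the coupling
    have e1 : ∫ ϑ, φ ϑ ∂(Riter P f' ε γ k θ) = ∫ p, φ p.1 ∂ξ := by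
      rw [← hfst, integral_map measurable_fst.aemeasurable hφc.aestronglyMeasurable]
    have e2 : ∫ ϑ, φ ϑ ∂π = ∫ p, φ p.2 ∂ξ := by
      rw [← hsnd, integral_map measurable_snd.aemeasurable hφc.aestronglyMeasurable]
    rw [e1, e2, ← integral_sub hφ1 hφ2]
    -- bound by the L¹ distance of the coupling
    have habs : |∫ p, (φ p.1 - φ p.2) ∂ξ| ≤ ∫ p, Lφ * ‖p.1 - p.2‖ ∂ξ := by
      have hni := norm_integral_le_integral_norm (μ := ξ) (fun p => φ p.1 - φ p.2)
      rw [Real.norm_eq_abs] at hni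
      refine le_trans hni ?_
      refine integral_mono (hφ1.sub hφ2).norm (hg1int.const_mul Lφ) fun p => ?_
      rw [Real.norm_eq_abs]
      exact hφ p.1 p.2
    rw [integral_const_mul] at habs
    -- Cauchy–Schwarz
    have hgnn : 0 ≤ ∫ p, ‖p.1 - p.2‖ ∂ξ := integral_nonneg fun p => norm_nonneg _
    have hofReal : ENNReal.ofReal (∫ p, ‖p.1 - p.2‖ ∂ξ) =
        ∫⁻ p, (‖p.1 - p.2‖₊ : ℝ≥0∞) ∂ξ := by
      rw [ofReal_integral_eq_lintegral_ofReal hg1int (ae_of_all _ fun p => norm_nonneg _)]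
      exact lintegral_congr fun p => by rw [ofReal_norm, enorm_eq_nnnorm]
    have hholder : ∫⁻ p, (‖p.1 - p.2‖₊ : ℝ≥0∞) ∂ξ ≤
        (∫⁻ p, (‖p.1 - p.2‖₊ : ℝ≥0∞) ^ 2 ∂ξ) ^ (1 / 2 : ℝ) := by
      have hconj : Real.HolderConjugate 2 2 := Real.HolderConjugate.two_two
      have hmeas : AEMeasurable (fun p : Vec d × Vec d => (‖p.1 - p.2‖₊ : ℝ≥0∞)) ξ :=
        ((measurable_fst.sub measurable_snd).nnnorm.coe_nnreal_ennreal).aemeasurable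
      have := ENNReal.lintegral_mul_le_Lp_mul_Lq ξ hconj hmeas aemeasurable_const
        (g := fun _ => (1 : ℝ≥0∞))
      simp only [Pi.mul_apply, mul_one, ENNReal.one_rpow, lintegral_one, measure_univ] at this
      refine le_trans this (le_of_eq ?_)
      have h2n : ∀ x : ℝ≥0∞, x ^ (2 : ℝ) = x ^ (2 : ℕ) := fun x => by
        rw [show (2 : ℝ) = ((2 : ℕ) : ℝ) by norm_num, ENNReal.rpow_natCast]
      simp only [h2n, mul_one]
    have hchain : ENNReal.ofReal (∫ p, ‖p.1 - p.2‖ ∂ξ) ≤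
        (ENNReal.ofReal (1 - 2 * m * γ * (1 - γ * L / 2)) ^ k *
          (∫⁻ ϑ, (‖θ - ϑ‖₊ : ℝ≥0∞) ^ 2 ∂π)) ^ (1 / 2 : ℝ) := by
      rw [hofReal]
      exact le_trans hholder (ENNReal.rpow_le_rpow hcost (by norm_num))
    have hfinal : ∫ p, ‖p.1 - p.2‖ ∂ξ ≤
        Real.sqrt ((1 - 2 * m * γ * (1 - γ * L / 2)) ^ k) *
          Real.sqrt (∫ ϑ, ‖θ - ϑ‖ ^ 2 ∂π) := by
      have hMreal : (∫⁻ ϑ, (‖θ - ϑ‖₊ : ℝ≥0∞) ^ 2 ∂π).toReal = ∫ ϑ, ‖θ - ϑ‖ ^ 2 ∂π := by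
        have hcont : Continuous fun ϑ : Vec d => ‖θ - ϑ‖ ^ 2 := by fun_prop
        rw [integral_eq_lintegral_of_nonneg_ae (f := fun ϑ : Vec d => ‖θ - ϑ‖ ^ 2)
          (ae_of_all _ fun ϑ => by positivity) hcont.aestronglyMeasurable]
        congr 1
        refine lintegral_congr fun ϑ => ?_
        rw [ENNReal.ofReal_pow (norm_nonneg _), ofReal_norm, enorm_eq_nnnorm]
      have hne : (ENNReal.ofReal (1 - 2 * m * γ * (1 - γ * L / 2)) ^ k *
          (∫⁻ ϑ, (‖θ - ϑ‖₊ : ℝ≥0∞) ^ 2 ∂π)) ^ (1 / 2 : ℝ) ≠ ⊤ :=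
        ENNReal.rpow_ne_top_of_nonneg (by norm_num) hBlt.ne
      calc ∫ p, ‖p.1 - p.2‖ ∂ξ
          = (ENNReal.ofReal (∫ p, ‖p.1 - p.2‖ ∂ξ)).toReal := by
            rw [ENNReal.toReal_ofReal hgnn]
        _ ≤ ((ENNReal.ofReal (1 - 2 * m * γ * (1 - γ * L / 2)) ^ k *
              (∫⁻ ϑ, (‖θ - ϑ‖₊ : ℝ≥0∞) ^ 2 ∂π)) ^ (1 / 2 : ℝ)).toReal :=
            ENNReal.toReal_mono hne hchain
        _ = ((ENNReal.ofReal (1 - 2 * m * γ * (1 - γ * L / 2)) ^ k *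
              (∫⁻ ϑ, (‖θ - ϑ‖₊ : ℝ≥0∞) ^ 2 ∂π)).toReal) ^ (1 / 2 : ℝ) :=
            (ENNReal.toReal_rpow _ _).symm
        _ = ((1 - 2 * m * γ * (1 - γ * L / 2)) ^ k * ∫ ϑ, ‖θ - ϑ‖ ^ 2 ∂π) ^ (1 / 2 : ℝ) := by
            rw [ENNReal.toReal_mul, ENNReal.toReal_pow, ENNReal.toReal_ofReal hρ0, hMreal]
        _ = Real.sqrt ((1 - 2 * m * γ * (1 - γ * L / 2)) ^ k * ∫ ϑ, ‖θ - ϑ‖ ^ 2 ∂π) :=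
            (Real.sqrt_eq_rpow _).symm
        _ = Real.sqrt ((1 - 2 * m * γ * (1 - γ * L / 2)) ^ k) *
              Real.sqrt (∫ ϑ, ‖θ - ϑ‖ ^ 2 ∂π) := Real.sqrt_mul (pow_nonneg hρ0 k) _
    calc |∫ p, (φ p.1 - φ p.2) ∂ξ| ≤ Lφ * ∫ p, ‖p.1 - p.2‖ ∂ξ := habs
      _ ≤ Lφ * (Real.sqrt ((1 - 2 * m * γ * (1 - γ * L / 2)) ^ k) *
            Real.sqrt (∫ ϑ, ‖θ - ϑ‖ ^ 2 ∂π)) := mul_le_mul_of_nonneg_left hfinal hLφ0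
      _ = Lφ * Real.sqrt ((1 - 2 * m * γ * (1 - γ * L / 2)) ^ k) *
            Real.sqrt (∫ ϑ, ‖θ - ϑ‖ ^ 2 ∂π) := by ring


end SGDFormal
end
end

section
/- Assume (H1), (H2), (H3) and (H4)(2), and let γ ∈ (0, 2/L). Then ∫_{ℝ^d} f'(θ) dπ_γ(θ) = 0. -/
open MeasureTheory ProbabilityTheory Filter Finset
open scoped ENNReal NNReal RealInnerProductSpace Topology

noncomputable section

namespace SGDFormal

/-- A function with finite second moment (w.r.t. a finite measure) is integrable. -/
lemma integrable_of_sq {α E : Type*} [MeasurableSpace α] [NormedAddCommGroup E]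
    {μ : Measure α} [IsFiniteMeasure μ] {f : α → E} (hf : AEStronglyMeasurable f μ)
    (h : ∫⁻ a, (‖f a‖₊ : ℝ≥0∞) ^ 2 ∂μ < ⊤) : Integrable f μ := by
  refine ⟨hf, ?_⟩
  have hb : ∀ x : ℝ≥0∞, x ≤ 1 + x ^ 2 := by
    intro x
    rcases le_total x 1 with hx | hx
    · exact hx.trans le_self_add
    · calc x = 1 * x := (one_mul x).symm
        _ ≤ x * x := mul_le_mul_left hx x
        _ = x ^ 2 := (sq x).symm
        _ ≤ 1 + x ^ 2 := le_add_self
  have : ∫⁻ a, (‖f a‖₊ : ℝ≥0∞) ∂μ ≤ ∫⁻ a, (1 + (‖f a‖₊ : ℝ≥0∞) ^ 2) ∂μ :=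
    lintegral_mono fun a => hb _
  rw [hasFiniteIntegral_def]
  refine this.trans_lt ?_
  rw [lintegral_add_left measurable_const]
  simp only [lintegral_const, one_mul]
  exact ENNReal.add_lt_top.2 ⟨measure_lt_top μ _, h⟩

/-- Fubini for `Measure.bind`, real-valued. -/
lemma integral_bind_real {α β : Type*} [MeasurableSpace α] [MeasurableSpace β]
    {m : Measure α} {κ : α → Measure β} (hκ : Measurable κ) {f : β → ℝ}
    (hf : Measurable f) (hint : Integrable f (m.bind κ)) :
    ∫ x, f x ∂(m.bind κ) = ∫ a, ∫ x, f x ∂(κ a) ∂m := by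
  set A : α → ℝ≥0∞ := fun a => ∫⁻ x, ENNReal.ofReal (f x) ∂κ a with hAdef
  set B : α → ℝ≥0∞ := fun a => ∫⁻ x, ENNReal.ofReal (-f x) ∂κ a with hBdef
  have hfp : Measurable fun x => ENNReal.ofReal (f x) := hf.ennreal_ofReal
  have hfn : Measurable fun x => ENNReal.ofReal (-f x) := hf.neg.ennreal_ofReal
  have hA : Measurable A := (Measure.measurable_lintegral hfp).comp hκ
  have hB : Measurable B := (Measure.measurable_lintegral hfn).comp hκ
  have hAi : ∫⁻ a, A a ∂m = ∫⁻ x, ENNReal.ofReal (f x) ∂(m.bind κ) :=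
    (Measure.lintegral_bind hκ.aemeasurable hfp.aemeasurable).symm
  have hBi : ∫⁻ a, B a ∂m = ∫⁻ x, ENNReal.ofReal (-f x) ∂(m.bind κ) :=
    (Measure.lintegral_bind hκ.aemeasurable hfn.aemeasurable).symm
  have hfin : ∫⁻ x, (‖f x‖₊ : ℝ≥0∞) ∂(m.bind κ) < ⊤ := hint.2
  have hple : ∀ x : β, ENNReal.ofReal (f x) ≤ (‖f x‖₊ : ℝ≥0∞) := fun x => by
    rw [← enorm_eq_nnnorm, ← ofReal_norm]
    exact ENNReal.ofReal_le_ofReal (le_abs_self _)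
  have hnle : ∀ x : β, ENNReal.ofReal (-f x) ≤ (‖f x‖₊ : ℝ≥0∞) := fun x => by
    rw [← enorm_eq_nnnorm, ← ofReal_norm]
    exact ENNReal.ofReal_le_ofReal (neg_le_abs _)
  have hAfin : ∫⁻ a, A a ∂m ≠ ⊤ := by
    rw [hAi]; exact ((lintegral_mono hple).trans_lt hfin).ne
  have hBfin : ∫⁻ a, B a ∂m ≠ ⊤ := by
    rw [hBi]; exact ((lintegral_mono hnle).trans_lt hfin).ne
  have hAae : ∀ᵐ a ∂m, A a < ⊤ := ae_lt_top hA hAfin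
  have hBae : ∀ᵐ a ∂m, B a < ⊤ := ae_lt_top hB hBfin
  have habs : ∀ r : ℝ, (‖r‖₊ : ℝ≥0∞) = ENNReal.ofReal r + ENNReal.ofReal (-r) := by
    intro r
    rcases le_total 0 r with h | h
    · rw [ENNReal.ofReal_of_nonpos (show -r ≤ 0 by linarith), add_zero, ← enorm_eq_nnnorm, ← ofReal_norm,
        Real.norm_eq_abs, abs_of_nonneg h]
    · rw [ENNReal.ofReal_of_nonpos h, zero_add, ← enorm_eq_nnnorm, ← ofReal_norm,
        Real.norm_eq_abs, abs_of_nonpos h]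
  have hIae : ∀ᵐ a ∂m, Integrable f (κ a) := by
    filter_upwards [hAae, hBae] with a ha hb
    refine ⟨hf.aestronglyMeasurable, ?_⟩
    rw [hasFiniteIntegral_def]
    have : ∫⁻ x, (‖f x‖₊ : ℝ≥0∞) ∂κ a = A a + B a := by
      rw [hAdef, hBdef, ← lintegral_add_left hfp]
      exact lintegral_congr fun x => habs (f x)
    exact this.trans_lt (ENNReal.add_lt_top.2 ⟨ha, hb⟩)
  calc ∫ x, f x ∂(m.bind κ)
      = (∫⁻ x, ENNReal.ofReal (f x) ∂(m.bind κ)).toReal -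
          (∫⁻ x, ENNReal.ofReal (-f x) ∂(m.bind κ)).toReal :=
        integral_eq_lintegral_pos_part_sub_lintegral_neg_part hint
    _ = (∫⁻ a, A a ∂m).toReal - (∫⁻ a, B a ∂m).toReal := by rw [hAi, hBi]
    _ = (∫ a, (A a).toReal ∂m) - (∫ a, (B a).toReal ∂m) := by
        rw [integral_toReal hA.aemeasurable hAae, integral_toReal hB.aemeasurable hBae]
    _ = ∫ a, ((A a).toReal - (B a).toReal) ∂m :=
        (integral_sub (integrable_toReal_of_lintegral_ne_top hA.aemeasurable hAfin)
          (integrable_toReal_of_lintegral_ne_top hB.aemeasurable hBfin)).symm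
    _ = ∫ a, ∫ x, f x ∂(κ a) ∂m := by
        refine integral_congr_ae ?_
        filter_upwards [hIae] with a ha
        exact (integral_eq_lintegral_pos_part_sub_lintegral_neg_part ha).symm

/-- Lemma 12: the mean of the gradient under the stationary distribution
vanishes. -/
theorem integral_gradient_stationary_eq_zero
    {d : ℕ} {Ω : Type*} [MeasurableSpace Ω]
    (P : Measure Ω) [IsProbabilityMeasure P] (ℱ : ℕ → MeasurableSpace Ω)
    (f : Vec d → ℝ) (f' : Vec d → Vec d) (ε : ℕ → Vec d → Ω → Vec d)
    (θstar : Vec d) (m L τ : ℝ) (hm : 0 < m) (hL : 0 < L)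
    (h1 : StrongConvexC f m) (h2 : H2 f f' L) (hmin : IsMinimizer f θstar)
    (h3 : H3 P ℱ ε) (h4 : H4 P f' ε θstar L 2 τ)
    (γ : ℝ) (hγ : γ ∈ Set.Ioo (0 : ℝ) (2 / L))
    (π : Measure (Vec d)) (hπ : IsProbabilityMeasure π) (hπ2 : FiniteSecondMoment π)
    (hπstat : IsStationary P f' ε γ π) :
    ∫ ϑ, f' ϑ ∂π = 0 := by
  obtain ⟨hγ0, hγ2⟩ := hγ
  obtain ⟨_, hle, hεmeas', hεcond, _, _⟩ := h3
  obtain ⟨hcoco, hτ0, hmom⟩ := h4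
  obtain ⟨_, _, _, hLip⟩ := h2
  -- measurability of the noise
  have hεm : ∀ θ : Vec d, Measurable (ε 1 θ) := fun θ =>
    (hεmeas' 0 θ).mono (hle 1) le_rfl
  -- continuity of f'
  have hf'cont : Continuous f' := by
    have : LipschitzWith (Real.toNNReal L) f' := by
      refine LipschitzWith.of_dist_le_mul fun x y => ?_
      rw [dist_eq_norm, dist_eq_norm]
      calc ‖f' x - f' y‖ ≤ L * ‖x - y‖ := hLip x y
        _ ≤ (Real.toNNReal L : ℝ) * ‖x - y‖ :=
          mul_le_mul_of_nonneg_right (Real.le_coe_toNNReal L) (norm_nonneg _)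
    exact this.continuous
  -- integrability of the noise at the optimum
  have hεstar_int : Integrable (ε 1 θstar) P :=
    integrable_of_sq (hεm θstar).aestronglyMeasurable
      ((hmom 1 le_rfl).trans_lt ENNReal.ofReal_lt_top)
  -- a.e. bound on the noise at any point
  have hbound : ∀ θ : Vec d, ∀ᵐ ω ∂P,
      ‖ε 1 θ ω‖ ≤ 2 * L * ‖θ - θstar‖ + ‖ε 1 θstar ω‖ := by
    intro θ
    filter_upwards [hcoco 1 le_rfl] with ω hω
    set D := (f' θ + ε 1 θ ω) - (f' θstar + ε 1 θstar ω) with hD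
    have h1' : ‖D‖ ^ 2 ≤ L * (‖D‖ * ‖θ - θstar‖) :=
      (hω θ θstar).trans (mul_le_mul_of_nonneg_left (real_inner_le_norm D _) hL.le)
    have hDle : ‖D‖ ≤ L * ‖θ - θstar‖ := by
      rcases (norm_nonneg D).eq_or_lt with h0 | h0
      · rw [← h0]; positivity
      · nlinarith [h1', h0]
    have heq : ε 1 θ ω = D + (f' θstar - f' θ) + ε 1 θstar ω := by
      rw [hD]; abel
    have hfd : ‖f' θstar - f' θ‖ ≤ L * ‖θ - θstar‖ := by
      calc ‖f' θstar - f' θ‖ ≤ L * ‖θstar - θ‖ := hLip θstar θ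
        _ = L * ‖θ - θstar‖ := by rw [norm_sub_rev]
    calc ‖ε 1 θ ω‖ = ‖D + (f' θstar - f' θ) + ε 1 θstar ω‖ := by rw [← heq]
      _ ≤ ‖D + (f' θstar - f' θ)‖ + ‖ε 1 θstar ω‖ := norm_add_le _ _
      _ ≤ (‖D‖ + ‖f' θstar - f' θ‖) + ‖ε 1 θstar ω‖ := by
          gcongr; exact norm_add_le _ _
      _ ≤ 2 * L * ‖θ - θstar‖ + ‖ε 1 θstar ω‖ := by linarith
  -- integrability of the noise at any point
  have hεint : ∀ θ : Vec d, Integrable (ε 1 θ) P := fun θ =>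
    Integrable.mono' ((integrable_const (2 * L * ‖θ - θstar‖)).add hεstar_int.norm)
      (hεm θ).aestronglyMeasurable (hbound θ)
  -- the noise has zero mean
  have hεzero : ∀ θ : Vec d, ∫ ω, ε 1 θ ω ∂P = 0 := by
    intro θ
    have h0 := hεcond 0 θ
    have h1' : ∫ ω, (P[ε 1 θ|ℱ 0]) ω ∂P = ∫ ω, ε 1 θ ω ∂P := integral_condExp (hle 0)
    rw [← h1', integral_congr_ae h0]
    simp
  -- integrability under π
  have hidint : Integrable (fun θ : Vec d => θ) π :=
    integrable_of_sq aestronglyMeasurable_id hπ2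
  have hf'int : Integrable f' π := by
    refine Integrable.mono'
      ((integrable_const ‖f' θstar‖).add
        (((hidint.sub (integrable_const θstar)).norm).const_mul L))
      hf'cont.aestronglyMeasurable ?_
    refine Eventually.of_forall fun θ => ?_
    have h1' : ‖f' θ‖ ≤ ‖f' θstar‖ + ‖f' θ - f' θstar‖ := by
      calc ‖f' θ‖ = ‖f' θstar + (f' θ - f' θstar)‖ := by congr 1; abel
        _ ≤ ‖f' θstar‖ + ‖f' θ - f' θstar‖ := norm_add_le _ _
    have h2' := hLip θ θstar
    simpa using h1'.trans (by linarith)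
  -- the kernel is a.e.-measurable (otherwise bind would be zero)
  have hκae : AEMeasurable (Rstep P f' ε γ) π := by
    by_contra h
    have h0 : π.bind (Rstep P f' ε γ) = 0 := by
      rw [Measure.bind, Measure.map_of_not_aemeasurable h, Measure.join_zero]
    have : π = 0 := hπstat.symm.trans h0
    have h1' := hπ.measure_univ
    rw [this] at h1'
    simp at h1'
  set κ' := hκae.mk (Rstep P f' ε γ) with hκ'def
  have hκ'm : Measurable κ' := hκae.measurable_mk
  have hae : Rstep P f' ε γ =ᵐ[π] κ' := hκae.ae_eq_mk
  have hbind' : π.bind κ' = π := by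
    have h' : π.bind κ' = π.bind (Rstep P f' ε γ) := by
      show (π.map κ').join = (π.map (Rstep P f' ε γ)).join
      rw [Measure.map_congr hae]
    exact h'.trans hπstat
  -- the key identity, tested against any vector v
  have hkey : ∀ v : Vec d, ∫ ϑ, ⟪v, f' ϑ⟫ ∂π = 0 := by
    intro v
    set g : Vec d → ℝ := fun x => ⟪v, x⟫ with hgdef
    have hgmeas : Measurable g := (continuous_const.inner continuous_id).measurable
    have hgint : Integrable g π := by
      have := (innerSL ℝ v).integrable_comp hidint
      exact this
    have key : ∫ x, g x ∂π = ∫ θ, ∫ x, g x ∂(κ' θ) ∂π := by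
      conv_lhs => rw [← hbind']
      exact integral_bind_real hκ'm hgmeas (by rw [hbind']; exact hgint)
    have hinner : ∀ᵐ θ ∂π, ∫ x, g x ∂(κ' θ) = g θ - γ * ⟪v, f' θ⟫ := by
      filter_upwards [hae] with θ hθ
      rw [← hθ]
      have hmapm : AEMeasurable (fun ω => θ - γ • (f' θ + ε 1 θ ω)) P :=
        (measurable_const.sub ((measurable_const.add (hεm θ)).const_smul γ)).aemeasurable
      rw [Rstep, integral_map hmapm hgmeas.aestronglyMeasurable]
      have hfun : (fun ω => g (θ - γ • (f' θ + ε 1 θ ω))) =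
          fun ω => (⟪v, θ⟫ - γ * ⟪v, f' θ⟫) - γ * ⟪v, ε 1 θ ω⟫ := by
        funext ω
        rw [hgdef]
        simp only [inner_sub_right, inner_smul_right, inner_add_right]
        ring
      rw [hfun]
      have hεv : Integrable (fun ω => ⟪v, ε 1 θ ω⟫) P :=
        (innerSL ℝ v).integrable_comp (hεint θ)
      rw [integral_sub (integrable_const _) (hεv.const_mul γ), integral_const,
        integral_const_mul]
      have : ∫ ω, ⟪v, ε 1 θ ω⟫ ∂P = 0 := by
        rw [integral_inner (hεint θ) v, hεzero θ, inner_zero_right]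
      rw [this]
      simp [hgdef]
    have hf'vint : Integrable (fun θ => ⟪v, f' θ⟫) π :=
      (innerSL ℝ v).integrable_comp hf'int
    have hstep : ∫ θ, ∫ x, g x ∂(κ' θ) ∂π = ∫ θ, (g θ - γ * ⟪v, f' θ⟫) ∂π :=
      integral_congr_ae hinner
    rw [hstep, integral_sub hgint (hf'vint.const_mul γ), integral_const_mul] at key
    have hγne : γ ≠ 0 := ne_of_gt hγ0
    have : γ * ∫ θ, ⟪v, f' θ⟫ ∂π = 0 := by linarith
    exact (mul_eq_zero.1 this).resolve_left hγne
  refine integral_eq_zero_of_forall_integral_inner_eq_zero (𝕜 := ℝ) f' hf'int hkey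
end SGDFormal
end
end

section
/- Assume (H1), (H2), (H3) and (H4)(2), and let γ ∈ (0, 2/L). For any Lipschitz function φ : ℝ^d → ℝ, the function ψ_γ(θ) = Σ_{i=0}^∞ (R_γ^i φ(θ) − π_γ(φ)) is well-defined (the series converges), Lipschitz, and satisfies (Id − R_γ)ψ_γ = φ − π_γ(φ) and π_γ(ψ_γ) = 0. Moreover, if ψ̃_γ : ℝ^d → ℝ is any other Lipschitz function satisfying (Id − R_γ)ψ̃_γ = φ − π_γ(φ) and π_γ(ψ̃_γ) = 0, then ψ̃_γ = ψ_γ. -/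
open MeasureTheory ProbabilityTheory Filter Finset
open scoped ENNReal NNReal RealInnerProductSpace Topology

noncomputable section

namespace SGDFormal

variable {d : ℕ}

/-- Auxiliary: a Lipschitz-type bound implies continuity. -/
private lemma lipCont {K : ℝ} {φ : Vec d → ℝ} (hK : 0 ≤ K)
    (hφ : ∀ x y : Vec d, |φ x - φ y| ≤ K * ‖x - y‖) : Continuous φ := by
  refine (LipschitzWith.of_dist_le_mul (K := ⟨K, hK⟩) fun x y => ?_).continuous
  rw [Real.dist_eq, dist_eq_norm]
  exact hφ x y

/-- Auxiliary: first-order lower bound from strong convexity. -/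
private lemma grad_lower_bound {f : Vec d → ℝ} {f' : Vec d → Vec d} {m : ℝ}
    (h1 : StrongConvexC f m) (hgrad : ∀ θ, HasGradientAt f (f' θ) θ)
    (θ η : Vec d) :
    f θ + ⟪f' θ, η - θ⟫ + m / 2 * ‖η - θ‖ ^ 2 ≤ f η := by
  have hc : HasDerivAt (fun t : ℝ => f (θ + t • (η - θ))) ⟪f' θ, η - θ⟫ 0 := by
    have hline : HasDerivAt (fun t : ℝ => θ + t • (η - θ)) (η - θ) 0 := by
      simpa using ((hasDerivAt_id (0:ℝ)).smul_const (η - θ)).const_add θ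
    have hF : HasFDerivAt f (InnerProductSpace.toDual ℝ (Vec d) (f' θ)) (θ + (0:ℝ) • (η - θ)) := by
      simpa using (hgrad θ).hasFDerivAt
    exact hF.comp_hasDerivAt (0:ℝ) hline
  have hslope : Tendsto (slope (fun t : ℝ => f (θ + t • (η - θ))) 0) (𝓝[>] 0)
      (𝓝 ⟪f' θ, η - θ⟫) :=
    ((hasDerivAt_iff_tendsto_slope).1 hc).mono_left
      (nhdsWithin_mono 0 fun x hx => ne_of_gt hx)
  have hrhs : Tendsto (fun t : ℝ => f η - f θ - m / 2 * (1 - t) * ‖η - θ‖ ^ 2) (𝓝[>] 0)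
      (𝓝 (f η - f θ - m / 2 * ‖η - θ‖ ^ 2)) := by
    have : Tendsto (fun t : ℝ => f η - f θ - m / 2 * (1 - t) * ‖η - θ‖ ^ 2) (𝓝 0)
        (𝓝 (f η - f θ - m / 2 * (1 - 0) * ‖η - θ‖ ^ 2)) :=
      (tendsto_const_nhds.sub (((tendsto_const_nhds.sub tendsto_id).const_mul _).mul
        tendsto_const_nhds))
    simpa using this.mono_left nhdsWithin_le_nhds
  have hev : ∀ᶠ t in 𝓝[>] (0:ℝ),
      slope (fun t : ℝ => f (θ + t • (η - θ))) 0 t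
        ≤ f η - f θ - m / 2 * (1 - t) * ‖η - θ‖ ^ 2 := by
    filter_upwards [Ioc_mem_nhdsGT_of_mem (Set.left_mem_Ico.2 one_pos)] with t ht
    obtain ⟨ht0, ht1⟩ := ht
    have hkey := h1 η θ t ⟨le_of_lt ht0, ht1⟩
    have hpt : θ + t • (η - θ) = t • η + (1 - t) • θ := by
      rw [smul_sub, sub_smul, one_smul]; abel
    rw [slope_def_field]
    have hval : f (θ + t • (η - θ)) ≤ t * f η + (1 - t) * f θ
        - m / 2 * (t * (1 - t)) * ‖η - θ‖ ^ 2 := by rw [hpt]; exact hkey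
    simp only [zero_smul, add_zero, sub_zero] at *
    rw [div_le_iff₀ ht0]
    nlinarith [hval]
  have := le_of_tendsto_of_tendsto hslope hrhs hev
  linarith

/-- Auxiliary: strong monotonicity of the gradient of a strongly convex function. -/
private lemma grad_strong_mono {f : Vec d → ℝ} {f' : Vec d → Vec d} {m : ℝ}
    (h1 : StrongConvexC f m) (hgrad : ∀ θ, HasGradientAt f (f' θ) θ)
    (θ η : Vec d) :
    m * ‖θ - η‖ ^ 2 ≤ ⟪f' θ - f' η, θ - η⟫ := by
  have h₁ := grad_lower_bound h1 hgrad θ η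
  have h₂ := grad_lower_bound h1 hgrad η θ
  have e1 : ⟪f' θ, η - θ⟫ = - ⟪f' θ, θ - η⟫ := by
    rw [← inner_neg_right]; congr 1; abel
  have e2 : ⟪f' θ - f' η, θ - η⟫ = ⟪f' θ, θ - η⟫ - ⟪f' η, θ - η⟫ := inner_sub_left _ _ _
  have e3 : ‖η - θ‖ = ‖θ - η‖ := norm_sub_rev _ _
  rw [e1, e3] at h₁
  rw [e2]
  linarith

/-- Auxiliary: Bochner integral against a bind of a measure with a measurable kernel. -/
private lemma integral_bind_aux {α : Type*} [MeasurableSpace α] (μ : Measure α)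
    (κ : α → Measure α) (hκ : Measurable κ) (f : α → ℝ) (hf : Measurable f)
    (hfin : ∫⁻ a, (‖f a‖₊ : ℝ≥0∞) ∂(μ.bind κ) ≠ ⊤) :
    ∫ a, f a ∂(μ.bind κ) = ∫ a, ∫ b, f b ∂(κ a) ∂μ := by
  classical
  set A : α → ℝ≥0∞ := fun a => ∫⁻ b, ENNReal.ofReal (f b) ∂(κ a) with hA
  set B : α → ℝ≥0∞ := fun a => ∫⁻ b, ENNReal.ofReal (-f b) ∂(κ a) with hB
  have hfp : Measurable fun b => ENNReal.ofReal (f b) := hf.ennreal_ofReal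
  have hfn : Measurable fun b => ENNReal.ofReal (-f b) := hf.neg.ennreal_ofReal
  have hAm : Measurable A := (Measure.measurable_lintegral hfp).comp hκ
  have hBm : Measurable B := (Measure.measurable_lintegral hfn).comp hκ
  have hApos : ∫⁻ a, A a ∂μ = ∫⁻ b, ENNReal.ofReal (f b) ∂(μ.bind κ) :=
    (Measure.lintegral_bind hκ.aemeasurable hfp.aemeasurable).symm
  have hBpos : ∫⁻ a, B a ∂μ = ∫⁻ b, ENNReal.ofReal (-f b) ∂(μ.bind κ) :=
    (Measure.lintegral_bind hκ.aemeasurable hfn.aemeasurable).symm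
  have hnn : ∀ x : ℝ, ENNReal.ofReal x ≤ (‖x‖₊ : ℝ≥0∞) := by
    intro x
    rcases le_total x 0 with hx | hx
    · simp [ENNReal.ofReal_eq_zero.2 hx]
    · rw [← enorm_eq_nnnorm, Real.enorm_eq_ofReal hx]
  have hAfin : ∫⁻ a, A a ∂μ ≠ ⊤ := by
    rw [hApos]
    exact ne_top_of_le_ne_top hfin (lintegral_mono fun b => hnn (f b))
  have hBfin : ∫⁻ a, B a ∂μ ≠ ⊤ := by
    rw [hBpos]
    refine ne_top_of_le_ne_top hfin (lintegral_mono fun b => ?_)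
    simpa [nnnorm_neg] using hnn (-f b)
  have hsplit : ∀ x : ℝ, (‖x‖₊ : ℝ≥0∞) = ENNReal.ofReal x + ENNReal.ofReal (-x) := by
    intro x
    rcases le_total x 0 with hx | hx
    · rw [ENNReal.ofReal_eq_zero.2 hx, zero_add, ← nnnorm_neg,
        ← enorm_eq_nnnorm, Real.enorm_eq_ofReal (by linarith)]
    · rw [ENNReal.ofReal_eq_zero.2 (by linarith : -x ≤ 0), add_zero,
        ← enorm_eq_nnnorm, Real.enorm_eq_ofReal hx]
  have hAae : ∀ᵐ a ∂μ, A a < ⊤ := ae_lt_top hAm hAfin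
  have hBae : ∀ᵐ a ∂μ, B a < ⊤ := ae_lt_top hBm hBfin
  have hptwise : ∀ᵐ a ∂μ,
      ∫ b, f b ∂(κ a) = (A a).toReal - (B a).toReal := by
    filter_upwards [hAae, hBae] with a hAa hBa
    have hint : Integrable f (κ a) := by
      refine ⟨hf.aestronglyMeasurable, ?_⟩
      have : ∫⁻ b, (‖f b‖₊ : ℝ≥0∞) ∂(κ a) = A a + B a := by
        rw [hA, hB, ← lintegral_add_left hfp]
        exact lintegral_congr fun b => hsplit (f b)
      rw [HasFiniteIntegral, show ∫⁻ b, ‖f b‖ₑ ∂(κ a) = A a + B a from this]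
      exact ENNReal.add_lt_top.2 ⟨hAa, hBa⟩
    exact integral_eq_lintegral_pos_part_sub_lintegral_neg_part hint
  have hintf : Integrable f (μ.bind κ) := ⟨hf.aestronglyMeasurable, lt_top_iff_ne_top.2 hfin⟩
  rw [integral_eq_lintegral_pos_part_sub_lintegral_neg_part hintf,
    integral_congr_ae hptwise, ← hApos, ← hBpos]
  rw [integral_sub (integrable_toReal_of_lintegral_ne_top hAm.aemeasurable hAfin)
    (integrable_toReal_of_lintegral_ne_top hBm.aemeasurable hBfin),
    integral_toReal hAm.aemeasurable hAae, integral_toReal hBm.aemeasurable hBae]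

end SGDFormal

namespace SGDFormal


set_option maxHeartbeats 4000000 in
/-- Lemma 11: existence, Lipschitz continuity and uniqueness of the Poisson
solution associated with a Lipschitz function `φ`. -/
theorem poisson_solution_lipschitz
    {d : ℕ} {Ω : Type*} [MeasurableSpace Ω]
    (P : Measure Ω) [IsProbabilityMeasure P] (ℱ : ℕ → MeasurableSpace Ω)
    (f : Vec d → ℝ) (f' : Vec d → Vec d) (ε : ℕ → Vec d → Ω → Vec d)
    (θstar : Vec d) (m L τ : ℝ) (hm : 0 < m) (hL : 0 < L)
    (h1 : StrongConvexC f m) (h2 : H2 f f' L) (hmin : IsMinimizer f θstar)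
    (h3 : H3 P ℱ ε) (h4 : H4 P f' ε θstar L 2 τ)
    (γ : ℝ) (hγ : γ ∈ Set.Ioo (0 : ℝ) (2 / L))
    (π : Measure (Vec d)) (hπ : IsProbabilityMeasure π) (hπ2 : FiniteSecondMoment π)
    (hπstat : IsStationary P f' ε γ π)
    (φ : Vec d → ℝ) (Lφ : ℝ) (hφ : ∀ x y : Vec d, |φ x - φ y| ≤ Lφ * ‖x - y‖) :
    (∀ θ : Vec d,
      Summable fun i : ℕ => (∫ ϑ, φ ϑ ∂(Riter P f' ε γ i θ)) - ∫ ϑ, φ ϑ ∂π) ∧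
    (∃ K : ℝ, ∀ x y : Vec d,
      |poisson P f' ε γ π φ x - poisson P f' ε γ π φ y| ≤ K * ‖x - y‖) ∧
    (∀ θ : Vec d,
      poisson P f' ε γ π φ θ - (∫ ϑ, poisson P f' ε γ π φ ϑ ∂(Rstep P f' ε γ θ)) =
        φ θ - ∫ ϑ, φ ϑ ∂π) ∧
    (∫ θ, poisson P f' ε γ π φ θ ∂π = 0) ∧
    ∀ ψ' : Vec d → ℝ, (∃ K' : ℝ, ∀ x y : Vec d, |ψ' x - ψ' y| ≤ K' * ‖x - y‖) →
      (∀ θ : Vec d,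
        ψ' θ - (∫ ϑ, ψ' ϑ ∂(Rstep P f' ε γ θ)) = φ θ - ∫ ϑ, φ ϑ ∂π) →
      (∫ θ, ψ' θ ∂π = 0) → ψ' = poisson P f' ε γ π φ := by
  classical
  obtain ⟨hγ0, hγ2⟩ := hγ
  obtain ⟨-, hle0, hεF, hεcond, -, -⟩ := h3
  obtain ⟨hcoco, -, hmom2⟩ := h4
  obtain ⟨-, hgrad, -, hf'lip⟩ := h2
  have hγL : γ * L < 2 := by
    have := (lt_div_iff₀ hL).1 hγ2; linarith
  set c : ℝ := γ * (2 - γ * L) with hcdef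
  have hc0 : 0 < c := mul_pos hγ0 (by linarith)
  set r : ℝ := max (1 - c * m / 2) 0 with hrdef
  have hr0 : 0 ≤ r := le_max_right _ _
  have hr1 : r < 1 := max_lt (by nlinarith) one_pos
  set g : Ω → Vec d → Vec d := fun ω θ => θ - γ • (f' θ + ε 1 θ ω) with hgdef
  have hRmap : ∀ θ, Rstep P f' ε γ θ = P.map (fun ω => g ω θ) := fun θ => rfl
  set T : (Vec d → ℝ) → Vec d → ℝ := fun φ θ => ∫ ϑ, φ ϑ ∂(Rstep P f' ε γ θ) with hTdef
  have hεm : ∀ θ, Measurable (ε 1 θ) := fun θ => (hεF 0 θ).mono (hle0 1) le_rfl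
  have hgm : ∀ θ, Measurable (fun ω => g ω θ) := fun θ => by
    simp only [hgdef]
    exact measurable_const.sub ((measurable_const.add (hεm θ)).const_smul γ)
  have hf'star : f' θstar = 0 := by
    have hloc : IsLocalMin f θstar := Filter.Eventually.of_forall hmin
    have h0 := hloc.hasFDerivAt_eq_zero (hgrad θstar).hasFDerivAt
    exact (LinearIsometryEquiv.map_eq_zero_iff _).1 h0
  have hmono := grad_strong_mono h1 hgrad
  -- The coercivity good set
  have haeco := hcoco 1 le_rfl
  obtain ⟨N, hsubN, hNm, hNnull⟩ := exists_measurable_superset_of_null (ae_iff.1 haeco)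
  have hNgood : ∀ ω, ω ∉ N → ∀ θ η : Vec d,
      ‖(f' θ + ε 1 θ ω) - (f' η + ε 1 η ω)‖ ^ 2 ≤
        L * ⟪(f' θ + ε 1 θ ω) - (f' η + ε 1 η ω), θ - η⟫ := by
    intro ω hω
    by_contra hcon
    exact hω (hsubN hcon)
  have hNae : ∀ᵐ ω ∂P, ω ∉ N := measure_eq_zero_iff_ae_notMem.1 hNnull
  -- pointwise consequences off N
  have hΔnorm : ∀ ω, ω ∉ N → ∀ θ η : Vec d,
      ‖(f' θ + ε 1 θ ω) - (f' η + ε 1 η ω)‖ ≤ L * ‖θ - η‖ := by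
    intro ω hω θ η
    set Δ := (f' θ + ε 1 θ ω) - (f' η + ε 1 η ω) with hΔ
    have h1' := hNgood ω hω θ η
    have h2' : ⟪Δ, θ - η⟫ ≤ ‖Δ‖ * ‖θ - η‖ := real_inner_le_norm _ _
    by_contra hcon
    push_neg at hcon
    have hLu : 0 ≤ L * ‖θ - η‖ := mul_nonneg hL.le (norm_nonneg _)
    have hΔpos : 0 < ‖Δ‖ := lt_of_le_of_lt hLu hcon
    nlinarith [mul_le_mul_of_nonneg_left h2' hL.le]
  have hinner0 : ∀ ω, ω ∉ N → ∀ θ η : Vec d,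
      0 ≤ ⟪(f' θ + ε 1 θ ω) - (f' η + ε 1 η ω), θ - η⟫ := by
    intro ω hω θ η
    have h1' := hNgood ω hω θ η
    nlinarith [sq_nonneg ‖(f' θ + ε 1 θ ω) - (f' η + ε 1 η ω)‖]
  have hgdiff : ∀ ω (θ η : Vec d), g ω θ - g ω η
      = (θ - η) - γ • ((f' θ + ε 1 θ ω) - (f' η + ε 1 η ω)) := by
    intro ω θ η
    simp only [hgdef, smul_sub]
    abel
  have hgsq : ∀ ω, ω ∉ N → ∀ θ η : Vec d,
      ‖g ω θ - g ω η‖ ^ 2 ≤ ‖θ - η‖ ^ 2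
        - c * ⟪(f' θ + ε 1 θ ω) - (f' η + ε 1 η ω), θ - η⟫ := by
    intro ω hω θ η
    set Δ := (f' θ + ε 1 θ ω) - (f' η + ε 1 η ω) with hΔ
    have hco := hNgood ω hω θ η
    rw [hgdiff ω θ η]
    have hexp : ‖(θ - η) - γ • Δ‖ ^ 2
        = ‖θ - η‖ ^ 2 - 2 * γ * ⟪Δ, θ - η⟫ + γ ^ 2 * ‖Δ‖ ^ 2 := by
      rw [norm_sub_sq_real, real_inner_smul_right, norm_smul]
      rw [real_inner_comm]
      simp [mul_pow, sq_abs]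
      ring
    rw [hexp, hcdef]
    nlinarith [sq_nonneg γ, mul_le_mul_of_nonneg_left hco (sq_nonneg γ)]
  have hg1lip : ∀ ω, ω ∉ N → ∀ θ η : Vec d, ‖g ω θ - g ω η‖ ≤ ‖θ - η‖ := by
    intro ω hω θ η
    have h1' := hgsq ω hω θ η
    have h2' := hinner0 ω hω θ η
    nlinarith [norm_nonneg (g ω θ - g ω η), norm_nonneg (θ - η)]
  -- integrability of the noise
  have hofR : ∀ v : Vec d, (‖v‖₊ : ℝ≥0∞) = ENNReal.ofReal ‖v‖ :=
    fun v => (ofReal_norm v).symm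
  have hε1fin : ∫⁻ ω, (‖ε 1 θstar ω‖₊ : ℝ≥0∞) ∂P < ⊤ := by
    have hpt : ∀ ω, (‖ε 1 θstar ω‖₊ : ℝ≥0∞) ≤ 1 + (‖ε 1 θstar ω‖₊ : ℝ≥0∞) ^ 2 := by
      intro ω
      set a : ℝ≥0∞ := (‖ε 1 θstar ω‖₊ : ℝ≥0∞) with ha
      rcases le_total a 1 with h | h
      · exact h.trans le_self_add
      · calc a = a * 1 := (mul_one a).symm
          _ ≤ a * a := by exact mul_le_mul_right h a
          _ = a ^ 2 := (sq a).symm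
          _ ≤ 1 + a ^ 2 := le_add_self
    calc ∫⁻ ω, (‖ε 1 θstar ω‖₊ : ℝ≥0∞) ∂P
        ≤ ∫⁻ ω, (1 + (‖ε 1 θstar ω‖₊ : ℝ≥0∞) ^ 2) ∂P := lintegral_mono hpt
      _ = 1 + ∫⁻ ω, (‖ε 1 θstar ω‖₊ : ℝ≥0∞) ^ 2 ∂P := by
          rw [lintegral_add_left measurable_const]
          simp
      _ ≤ 1 + ENNReal.ofReal (τ ^ 2) := by
          exact add_le_add le_rfl (hmom2 1 le_rfl)
      _ < ⊤ := by simp [ENNReal.add_lt_top]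
  have hεstar_int : Integrable (ε 1 θstar) P := ⟨(hεm θstar).aestronglyMeasurable, hε1fin⟩
  have hεint : ∀ θ, Integrable (ε 1 θ) P := by
    intro θ
    refine Integrable.mono' ((integrable_const (2 * L * ‖θ - θstar‖)).add hεstar_int.norm)
      (hεm θ).aestronglyMeasurable ?_
    filter_upwards [hNae] with ω hω
    have hkey : ε 1 θ ω = ((f' θ + ε 1 θ ω) - (f' θstar + ε 1 θstar ω))
        - (f' θ - f' θstar) + ε 1 θstar ω := by abel
    have h1' := hΔnorm ω hω θ θstar
    have h2' := hf'lip θ θstar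
    calc ‖ε 1 θ ω‖ = ‖((f' θ + ε 1 θ ω) - (f' θstar + ε 1 θstar ω))
        - (f' θ - f' θstar) + ε 1 θstar ω‖ := by rw [← hkey]
      _ ≤ ‖((f' θ + ε 1 θ ω) - (f' θstar + ε 1 θstar ω)) - (f' θ - f' θstar)‖
          + ‖ε 1 θstar ω‖ := norm_add_le _ _
      _ ≤ (‖(f' θ + ε 1 θ ω) - (f' θstar + ε 1 θstar ω)‖ + ‖f' θ - f' θstar‖)
          + ‖ε 1 θstar ω‖ := by gcongr; exact norm_sub_le _ _
      _ ≤ 2 * L * ‖θ - θstar‖ + ‖ε 1 θstar ω‖ := by linarith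
  have hεmean : ∀ θ, ∫ ω, ε 1 θ ω ∂P = 0 := by
    intro θ
    have hcond := hεcond 0 θ
    simp only [zero_add] at hcond
    calc ∫ ω, ε 1 θ ω ∂P = ∫ ω, (P[ε 1 θ|ℱ 0]) ω ∂P := (integral_condExp (hle0 0)).symm
      _ = ∫ ω, (0 : Vec d) ∂P := integral_congr_ae hcond
      _ = 0 := integral_zero _ _
  have hΔint : ∀ θ η : Vec d, Integrable
      (fun ω => (f' θ + ε 1 θ ω) - (f' η + ε 1 η ω)) P := fun θ η =>
    ((integrable_const _).add (hεint θ)).sub ((integrable_const _).add (hεint η))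
  have hΔmean : ∀ θ η : Vec d,
      ∫ ω, ⟪(f' θ + ε 1 θ ω) - (f' η + ε 1 η ω), θ - η⟫ ∂P = ⟪f' θ - f' η, θ - η⟫ := by
    intro θ η
    have hflip : (fun ω => ⟪(f' θ + ε 1 θ ω) - (f' η + ε 1 η ω), θ - η⟫)
        = fun ω => ⟪θ - η, (f' θ + ε 1 θ ω) - (f' η + ε 1 η ω)⟫ :=
      funext fun ω => real_inner_comm _ _
    rw [hflip, integral_inner (hΔint θ η)]
    have hint1 : ∀ ξ : Vec d, Integrable (fun ω => f' ξ + ε 1 ξ ω) P := fun ξ =>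
      (integrable_const (f' ξ)).add (hεint ξ)
    have hintadd : ∀ ξ : Vec d, ∫ ω, (f' ξ + ε 1 ξ ω) ∂P = f' ξ := by
      intro ξ
      rw [integral_add (integrable_const _) (hεint ξ), hεmean ξ, integral_const]
      simp
    have : ∫ ω, ((f' θ + ε 1 θ ω) - (f' η + ε 1 η ω)) ∂P = f' θ - f' η := by
      rw [integral_sub (hint1 θ) (hint1 η), hintadd θ, hintadd η]
    rw [this, real_inner_comm]
  -- L¹ contraction of the synchronous coupling
  have hmean_contract : ∀ θ η : Vec d, ∫ ω, ‖g ω θ - g ω η‖ ∂P ≤ r * ‖θ - η‖ := by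
    intro θ η
    by_cases hθη : θ = η
    · simp [hθη, mul_nonneg hr0 (norm_nonneg _)]
    · have ha : 0 < ‖θ - η‖ := by
        rw [norm_pos_iff, sub_ne_zero]; exact hθη
      set a : ℝ := ‖θ - η‖ with hadef
      have hptwise : ∀ᵐ ω ∂P, ‖g ω θ - g ω η‖
          ≤ a - (c / (2 * a)) * ⟪(f' θ + ε 1 θ ω) - (f' η + ε 1 η ω), θ - η⟫ := by
        filter_upwards [hNae] with ω hω
        set X := ⟪(f' θ + ε 1 θ ω) - (f' η + ε 1 η ω), θ - η⟫ with hX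
        have h1' := hgsq ω hω θ η
        have h2' := hinner0 ω hω θ η
        have h3' := hg1lip ω hω θ η
        have hb0 : (0:ℝ) ≤ ‖g ω θ - g ω η‖ := norm_nonneg _
        have h2ab : 2 * a * ‖g ω θ - g ω η‖ ≤ 2 * a ^ 2 - c * X := by
          nlinarith [sq_nonneg (a - ‖g ω θ - g ω η‖)]
        have hfrac : (c / (2 * a)) * X ≤ a - ‖g ω θ - g ω η‖ := by
          rw [div_mul_eq_mul_div, div_le_iff₀ (by positivity : (0:ℝ) < 2 * a)]
          nlinarith
        linarith
      have hLHSint : Integrable (fun ω => ‖g ω θ - g ω η‖) P := by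
        refine Integrable.mono' (integrable_const a)
          (((hgm θ).sub (hgm η)).norm).aestronglyMeasurable ?_
        filter_upwards [hNae] with ω hω
        simpa using hg1lip ω hω θ η
      have hXint : Integrable
          (fun ω => ⟪(f' θ + ε 1 θ ω) - (f' η + ε 1 η ω), θ - η⟫) P :=
        (hΔint θ η).inner_const _
      have hRHSint : Integrable (fun ω => a - (c / (2 * a)) *
          ⟪(f' θ + ε 1 θ ω) - (f' η + ε 1 η ω), θ - η⟫) P :=
        (integrable_const a).sub (hXint.const_mul _)
      have hstep := integral_mono_ae hLHSint hRHSint hptwise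
      have hcomp : ∫ ω, (a - (c / (2 * a)) *
          ⟪(f' θ + ε 1 θ ω) - (f' η + ε 1 η ω), θ - η⟫) ∂P
          = a - (c / (2 * a)) * ⟪f' θ - f' η, θ - η⟫ := by
        rw [integral_sub (integrable_const a) (hXint.const_mul _),
          integral_const_mul, hΔmean θ η, integral_const]
        simp
      rw [hcomp] at hstep
      have hca : 0 < c / (2 * a) := by positivity
      have hmm := hmono θ η
      have hchain : a - (c / (2 * a)) * ⟪f' θ - f' η, θ - η⟫ ≤ (1 - c * m / 2) * a := by
        have := mul_le_mul_of_nonneg_left hmm hca.le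
        have hid : (c / (2 * a)) * (m * a ^ 2) = c * m * a / 2 := by
          field_simp
        nlinarith
      have hfin : (1 - c * m / 2) * a ≤ r * a :=
        mul_le_mul_of_nonneg_right (le_max_left _ _) (norm_nonneg _)
      linarith
  -- kernel measurability via a modification that is everywhere 1-Lipschitz
  set gt : Ω → Vec d → Vec d := fun ω θ => if ω ∈ N then θ else g ω θ with hgtdef
  have hgt_eq : ∀ θ, (fun ω => g ω θ) =ᵐ[P] fun ω => gt ω θ := by
    intro θ
    filter_upwards [hNae] with ω hω
    simp only [hgtdef, if_neg hω]
  have hRmap' : ∀ θ, Rstep P f' ε γ θ = P.map (fun ω => gt ω θ) := fun θ => by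
    rw [hRmap θ]; exact Measure.map_congr (hgt_eq θ)
  have hgt_cont : ∀ ω, Continuous fun θ => gt ω θ := by
    intro ω
    by_cases hω : ω ∈ N
    · simp only [hgtdef, if_pos hω]; exact continuous_id
    · refine (LipschitzWith.of_dist_le_mul (K := 1) fun θ η => ?_).continuous
      simp only [hgtdef, if_neg hω, dist_eq_norm]
      simpa using hg1lip ω hω θ η
  have hgt_meas : ∀ θ, Measurable fun ω => gt ω θ := fun θ =>
    Measurable.ite hNm measurable_const (hgm θ)
  have hgt_joint : Measurable (Function.uncurry fun (θ : Vec d) (ω : Ω) => gt ω θ) :=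
    measurable_uncurry_of_continuous_of_measurable hgt_cont hgt_meas
  have hRmeas : Measurable (Rstep P f' ε γ) := by
    refine Measure.measurable_measure.2 fun s hs => ?_
    have heq : ∀ θ, Rstep P f' ε γ θ s = P (Prod.mk θ ⁻¹'
        (Function.uncurry (fun (θ : Vec d) (ω : Ω) => gt ω θ) ⁻¹' s)) := by
      intro θ
      rw [hRmap' θ, Measure.map_apply (hgt_meas θ) hs]
      rfl
    simp_rw [heq]
    exact measurable_measure_prodMk_left (hgt_joint hs)
  have hRprob : ∀ θ, IsProbabilityMeasure (Rstep P f' ε γ θ) := fun θ => by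
    rw [hRmap θ]; exact Measure.isProbabilityMeasure_map (hgm θ).aemeasurable
  have hbindprob : ∀ μ : Measure (Vec d), IsProbabilityMeasure μ →
      IsProbabilityMeasure (μ.bind (Rstep P f' ε γ)) := by
    intro μ hμ
    constructor
    rw [Measure.bind_apply MeasurableSet.univ hRmeas.aemeasurable]
    have : ∀ ϑ, Rstep P f' ε γ ϑ Set.univ = 1 := fun ϑ => (hRprob ϑ).measure_univ
    simp_rw [this]
    simp [lintegral_one, hμ.measure_univ]
  have hRiterprob : ∀ k θ, IsProbabilityMeasure (Riter P f' ε γ k θ) := by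
    intro k
    induction k with
    | zero => intro θ; rw [show Riter P f' ε γ 0 θ = Measure.dirac θ from rfl]; infer_instance
    | succ k ih =>
      intro θ
      rw [show Riter P f' ε γ (k+1) θ = (Riter P f' ε γ k θ).bind (Rstep P f' ε γ) from rfl]
      exact hbindprob _ (ih θ)
  -- first moments
  have hgbound : ∀ θ, ∀ ω, ω ∉ N → ‖g ω θ‖ ≤ ‖θ‖ + 2 * ‖θstar‖ + γ * ‖ε 1 θstar ω‖ := by
    intro θ ω hω
    have hstar : g ω θstar = θstar - γ • ε 1 θstar ω := by
      simp only [hgdef, hf'star, zero_add]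
    have h1' := hg1lip ω hω θ θstar
    calc ‖g ω θ‖ = ‖(g ω θ - g ω θstar) + (g ω θstar - θstar) + θstar‖ := by
          congr 1; abel
      _ ≤ ‖g ω θ - g ω θstar‖ + ‖g ω θstar - θstar‖ + ‖θstar‖ :=
          norm_add₃_le
      _ ≤ ‖θ - θstar‖ + γ * ‖ε 1 θstar ω‖ + ‖θstar‖ := by
          have : ‖g ω θstar - θstar‖ = γ * ‖ε 1 θstar ω‖ := by
            rw [hstar]
            simp [norm_smul, abs_of_pos hγ0]
          rw [this]; gcongr
      _ ≤ (‖θ‖ + ‖θstar‖) + γ * ‖ε 1 θstar ω‖ + ‖θstar‖ := by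
          gcongr; exact norm_sub_le _ _
      _ = ‖θ‖ + 2 * ‖θstar‖ + γ * ‖ε 1 θstar ω‖ := by ring
  set Cmom : ℝ≥0∞ := ENNReal.ofReal (2 * ‖θstar‖)
      + ENNReal.ofReal γ * ∫⁻ ω, (‖ε 1 θstar ω‖₊ : ℝ≥0∞) ∂P with hCmomdef
  have hCmomfin : Cmom ≠ ⊤ := by
    rw [hCmomdef]
    exact ENNReal.add_ne_top.2 ⟨ENNReal.ofReal_ne_top,
      ENNReal.mul_ne_top ENNReal.ofReal_ne_top hε1fin.ne⟩
  have hRstepmom : ∀ ϑ, ∫⁻ x, (‖x‖₊ : ℝ≥0∞) ∂(Rstep P f' ε γ ϑ) ≤ (‖ϑ‖₊ : ℝ≥0∞) + Cmom := by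
    intro ϑ
    rw [hRmap ϑ, lintegral_map (measurable_nnnorm.coe_nnreal_ennreal) (hgm ϑ)]
    have hb : ∀ᵐ ω ∂P, (‖g ω ϑ‖₊ : ℝ≥0∞) ≤ ((‖ϑ‖₊ : ℝ≥0∞) + ENNReal.ofReal (2 * ‖θstar‖))
        + ENNReal.ofReal γ * (‖ε 1 θstar ω‖₊ : ℝ≥0∞) := by
      filter_upwards [hNae] with ω hω
      rw [hofR (g ω ϑ)]
      calc ENNReal.ofReal ‖g ω ϑ‖
          ≤ ENNReal.ofReal ((‖ϑ‖ + 2 * ‖θstar‖) + γ * ‖ε 1 θstar ω‖) :=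
            ENNReal.ofReal_le_ofReal (by have := hgbound ϑ ω hω; linarith)
        _ ≤ ENNReal.ofReal (‖ϑ‖ + 2 * ‖θstar‖) + ENNReal.ofReal (γ * ‖ε 1 θstar ω‖) :=
            ENNReal.ofReal_add_le
        _ ≤ ((ENNReal.ofReal ‖ϑ‖ + ENNReal.ofReal (2 * ‖θstar‖)))
            + ENNReal.ofReal γ * ENNReal.ofReal ‖ε 1 θstar ω‖ :=
            add_le_add ENNReal.ofReal_add_le (le_of_eq (ENNReal.ofReal_mul hγ0.le))
        _ = ((‖ϑ‖₊ : ℝ≥0∞) + ENNReal.ofReal (2 * ‖θstar‖))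
            + ENNReal.ofReal γ * (‖ε 1 θstar ω‖₊ : ℝ≥0∞) := by
            rw [hofR ϑ, hofR (ε 1 θstar ω)]
    calc ∫⁻ ω, (‖g ω ϑ‖₊ : ℝ≥0∞) ∂P
        ≤ ∫⁻ ω, (((‖ϑ‖₊ : ℝ≥0∞) + ENNReal.ofReal (2 * ‖θstar‖))
          + ENNReal.ofReal γ * (‖ε 1 θstar ω‖₊ : ℝ≥0∞)) ∂P := lintegral_mono_ae hb
      _ = ((‖ϑ‖₊ : ℝ≥0∞) + ENNReal.ofReal (2 * ‖θstar‖))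
          + ENNReal.ofReal γ * ∫⁻ ω, (‖ε 1 θstar ω‖₊ : ℝ≥0∞) ∂P := by
          have hmε : Measurable fun ω => (‖ε 1 θstar ω‖₊ : ℝ≥0∞) :=
            (hεm θstar).nnnorm.coe_nnreal_ennreal
          rw [lintegral_add_left measurable_const, lintegral_const_mul _ hmε]
          simp
      _ = (‖ϑ‖₊ : ℝ≥0∞) + Cmom := by rw [hCmomdef]; ring
  have hbindmom : ∀ μ : Measure (Vec d), (∫⁻ x, (‖x‖₊ : ℝ≥0∞) ∂μ ≠ ⊤) →
      IsProbabilityMeasure μ → ∫⁻ x, (‖x‖₊ : ℝ≥0∞) ∂(μ.bind (Rstep P f' ε γ)) ≠ ⊤ := by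
    intro μ hμmom hμ
    rw [Measure.lintegral_bind hRmeas.aemeasurable measurable_nnnorm.coe_nnreal_ennreal.aemeasurable]
    refine ne_top_of_le_ne_top ?_ (lintegral_mono fun ϑ => hRstepmom ϑ)
    rw [lintegral_add_right _ measurable_const, lintegral_const, hμ.measure_univ, mul_one]
    exact ENNReal.add_ne_top.2 ⟨hμmom, hCmomfin⟩
  have hItermom : ∀ k θ, ∫⁻ x, (‖x‖₊ : ℝ≥0∞) ∂(Riter P f' ε γ k θ) ≠ ⊤ := by
    intro k
    induction k with
    | zero =>
      intro θ
      rw [show Riter P f' ε γ 0 θ = Measure.dirac θ from rfl,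
        lintegral_dirac' _ measurable_nnnorm.coe_nnreal_ennreal]
      exact ENNReal.coe_ne_top
    | succ k ih =>
      intro θ
      rw [show Riter P f' ε γ (k+1) θ = (Riter P f' ε γ k θ).bind (Rstep P f' ε γ) from rfl]
      exact hbindmom _ (ih θ) (hRiterprob k θ)
  have hπmom : ∫⁻ x, (‖x‖₊ : ℝ≥0∞) ∂π ≠ ⊤ := by
    have hpt : ∀ x : Vec d, (‖x‖₊ : ℝ≥0∞) ≤ 1 + (‖x‖₊ : ℝ≥0∞) ^ 2 := by
      intro x
      set a : ℝ≥0∞ := (‖x‖₊ : ℝ≥0∞)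
      rcases le_total a 1 with h | h
      · exact h.trans le_self_add
      · calc a = a * 1 := (mul_one a).symm
          _ ≤ a * a := by exact mul_le_mul_right h a
          _ = a ^ 2 := (sq a).symm
          _ ≤ 1 + a ^ 2 := le_add_self
    refine ne_top_of_le_ne_top ?_ (lintegral_mono hpt)
    rw [lintegral_add_left measurable_const, lintegral_const, hπ.measure_univ, mul_one]
    exact ENNReal.add_ne_top.2 ⟨ENNReal.one_ne_top, hπ2.ne⟩
  -- integrability of Lipschitz functions against measures with finite first moment
  have hlipIntAux : ∀ (ν : Measure (Vec d)), IsProbabilityMeasure ν →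
      (∫⁻ x, (‖x‖₊ : ℝ≥0∞) ∂ν ≠ ⊤) → ∀ (K : ℝ) (ψ : Vec d → ℝ), 0 ≤ K →
      (∀ x y : Vec d, |ψ x - ψ y| ≤ K * ‖x - y‖) →
      (∫⁻ x, (‖ψ x‖₊ : ℝ≥0∞) ∂ν ≠ ⊤) ∧ Integrable ψ ν := by
    intro ν hν hνmom K ψ hK hψl
    have hbd : ∀ x : Vec d, |ψ x| ≤ |ψ 0| + K * ‖x‖ := by
      intro x
      have := hψl x 0
      rw [sub_zero] at this
      calc |ψ x| ≤ |ψ x - ψ 0| + |ψ 0| := by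
            have := abs_sub_abs_le_abs_sub (ψ x) (ψ 0); linarith [abs_sub (ψ x) (ψ 0)]
        _ ≤ |ψ 0| + K * ‖x‖ := by linarith
    have hfin : ∫⁻ x, (‖ψ x‖₊ : ℝ≥0∞) ∂ν ≠ ⊤ := by
      have hb : ∀ x : Vec d, (‖ψ x‖₊ : ℝ≥0∞)
          ≤ ENNReal.ofReal (|ψ 0|) + ENNReal.ofReal K * (‖x‖₊ : ℝ≥0∞) := by
        intro x
        rw [(enorm_eq_nnnorm (ψ x)).symm, Real.enorm_eq_ofReal_abs]
        calc ENNReal.ofReal (|ψ x|) ≤ ENNReal.ofReal (|ψ 0| + K * ‖x‖) :=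
              ENNReal.ofReal_le_ofReal (hbd x)
          _ ≤ ENNReal.ofReal (|ψ 0|) + ENNReal.ofReal (K * ‖x‖) := ENNReal.ofReal_add_le
          _ = ENNReal.ofReal (|ψ 0|) + ENNReal.ofReal K * (‖x‖₊ : ℝ≥0∞) := by
              rw [ENNReal.ofReal_mul hK, hofR]
      refine ne_top_of_le_ne_top ?_ (lintegral_mono hb)
      rw [lintegral_add_left measurable_const, lintegral_const_mul _
        measurable_nnnorm.coe_nnreal_ennreal, lintegral_const, hν.measure_univ, mul_one]
      exact ENNReal.add_ne_top.2 ⟨ENNReal.ofReal_ne_top,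
        ENNReal.mul_ne_top ENNReal.ofReal_ne_top hνmom⟩
    exact ⟨hfin, ⟨((lipCont hK hψl).measurable).aestronglyMeasurable,
      lt_top_iff_ne_top.2 hfin⟩⟩
  -- the fundamental bind formula for Lipschitz functions
  have hbindφ : ∀ μ : Measure (Vec d), IsProbabilityMeasure μ →
      (∫⁻ x, (‖x‖₊ : ℝ≥0∞) ∂μ ≠ ⊤) → ∀ (K : ℝ) (ψ : Vec d → ℝ), 0 ≤ K →
      (∀ x y : Vec d, |ψ x - ψ y| ≤ K * ‖x - y‖) →
      ∫ x, ψ x ∂(μ.bind (Rstep P f' ε γ)) = ∫ x, T ψ x ∂μ := by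
    intro μ hμ hμmom K ψ hK hψl
    haveI := hbindprob μ hμ
    have hfin := (hlipIntAux (μ.bind (Rstep P f' ε γ)) (hbindprob μ hμ)
      (hbindmom μ hμmom hμ) K ψ hK hψl).1
    exact integral_bind_aux μ _ hRmeas ψ (lipCont hK hψl).measurable hfin
  -- Lipschitz contraction of T and its iterates
  have hcomp_int : ∀ (K : ℝ) (ψ : Vec d → ℝ), 0 ≤ K →
      (∀ x y : Vec d, |ψ x - ψ y| ≤ K * ‖x - y‖) → ∀ θ,
      Integrable (fun ω => ψ (g ω θ)) P := by
    intro K ψ hK hψl θ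
    refine Integrable.mono' ((integrable_const (|ψ θstar| + K * (‖θ‖ + 3 * ‖θstar‖))).add
      ((hεstar_int.norm).const_mul (K * γ))) (((lipCont hK hψl).measurable).comp
      (hgm θ)).aestronglyMeasurable ?_
    filter_upwards [hNae] with ω hω
    have h1' := hψl (g ω θ) θstar
    have h2' := hgbound θ ω hω
    have h3' : ‖g ω θ - θstar‖ ≤ ‖g ω θ‖ + ‖θstar‖ := norm_sub_le _ _
    have habs : |ψ (g ω θ)| ≤ |ψ θstar| + K * ‖g ω θ - θstar‖ := by
      have := abs_sub_abs_le_abs_sub (ψ (g ω θ)) (ψ θstar)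
      linarith
    have : K * ‖g ω θ - θstar‖ ≤ K * ((‖θ‖ + 2 * ‖θstar‖) + γ * ‖ε 1 θstar ω‖ + ‖θstar‖) := by
      apply mul_le_mul_of_nonneg_left _ hK
      linarith
    simp only [Pi.add_apply, Real.norm_eq_abs]
    nlinarith [habs, this]
  have hTmap : ∀ (ψ : Vec d → ℝ), Continuous ψ → ∀ θ, T ψ θ = ∫ ω, ψ (g ω θ) ∂P := by
    intro ψ hψc θ
    simp only [hTdef]
    rw [hRmap θ]
    exact integral_map (hgm θ).aemeasurable hψc.aestronglyMeasurable
  have hT_lip : ∀ (K : ℝ) (ψ : Vec d → ℝ), 0 ≤ K →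
      (∀ x y : Vec d, |ψ x - ψ y| ≤ K * ‖x - y‖) →
      ∀ x y : Vec d, |T ψ x - T ψ y| ≤ (K * r) * ‖x - y‖ := by
    intro K ψ hK hψl x y
    have hc' := lipCont hK hψl
    rw [hTmap ψ hc' x, hTmap ψ hc' y,
      ← integral_sub (hcomp_int K ψ hK hψl x) (hcomp_int K ψ hK hψl y)]
    have h1' : |∫ ω, (ψ (g ω x) - ψ (g ω y)) ∂P| ≤ ∫ ω, |ψ (g ω x) - ψ (g ω y)| ∂P := by
      simpa [Real.norm_eq_abs] using
        norm_integral_le_integral_norm (μ := P) (f := fun ω => ψ (g ω x) - ψ (g ω y))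
    have hgnormint : Integrable (fun ω => ‖g ω x - g ω y‖) P := by
      refine Integrable.mono' (integrable_const ‖x - y‖)
        (((hgm x).sub (hgm y)).norm).aestronglyMeasurable ?_
      filter_upwards [hNae] with ω hω
      simpa using hg1lip ω hω x y
    have h2' : ∫ ω, |ψ (g ω x) - ψ (g ω y)| ∂P ≤ ∫ ω, K * ‖g ω x - g ω y‖ ∂P := by
      refine integral_mono ((hcomp_int K ψ hK hψl x).sub (hcomp_int K ψ hK hψl y)).abs
        (hgnormint.const_mul K) ?_
      intro ω
      exact hψl _ _
    have h3' : ∫ ω, K * ‖g ω x - g ω y‖ ∂P ≤ K * (r * ‖x - y‖) := by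
      rw [integral_const_mul]
      exact mul_le_mul_of_nonneg_left (hmean_contract x y) hK
    calc |∫ ω, (ψ (g ω x) - ψ (g ω y)) ∂P|
        ≤ ∫ ω, |ψ (g ω x) - ψ (g ω y)| ∂P := h1'
      _ ≤ K * (r * ‖x - y‖) := le_trans h2' h3'
      _ = (K * r) * ‖x - y‖ := by ring
  have hiterLip : ∀ (K : ℝ) (ψ : Vec d → ℝ), 0 ≤ K →
      (∀ x y : Vec d, |ψ x - ψ y| ≤ K * ‖x - y‖) → ∀ k,
      ∀ x y : Vec d, |T^[k] ψ x - T^[k] ψ y| ≤ (K * r ^ k) * ‖x - y‖ := by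
    intro K ψ hK hψl k
    induction k generalizing ψ K with
    | zero => intro x y; simpa using hψl x y
    | succ k ih =>
      intro x y
      rw [Function.iterate_succ_apply]
      have := ih (K * r) (T ψ) (mul_nonneg hK hr0) (hT_lip K ψ hK hψl) x y
      calc |T^[k] (T ψ) x - T^[k] (T ψ) y| ≤ ((K * r) * r ^ k) * ‖x - y‖ := this
        _ = (K * r ^ (k+1)) * ‖x - y‖ := by ring
  have hiter : ∀ (K : ℝ) (ψ : Vec d → ℝ), 0 ≤ K →
      (∀ x y : Vec d, |ψ x - ψ y| ≤ K * ‖x - y‖) → ∀ k θ,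
      ∫ x, ψ x ∂(Riter P f' ε γ k θ) = T^[k] ψ θ := by
    intro K ψ hK hψl k
    induction k generalizing ψ K with
    | zero =>
      intro θ
      rw [show Riter P f' ε γ 0 θ = Measure.dirac θ from rfl]
      simp only [Function.iterate_zero_apply]
      exact integral_dirac' _ _ ((lipCont hK hψl).measurable).stronglyMeasurable
    | succ k ih =>
      intro θ
      rw [show Riter P f' ε γ (k+1) θ = (Riter P f' ε γ k θ).bind (Rstep P f' ε γ) from rfl,
        hbindφ (Riter P f' ε γ k θ) (hRiterprob k θ) (hItermom k θ) K ψ hK hψl,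
        ih (K * r) (T ψ) (mul_nonneg hK hr0) (hT_lip K ψ hK hψl) θ,
        Function.iterate_succ_apply]
  -- stationarity
  have hstat1 : ∀ (K : ℝ) (ψ : Vec d → ℝ), 0 ≤ K →
      (∀ x y : Vec d, |ψ x - ψ y| ≤ K * ‖x - y‖) →
      ∫ x, T ψ x ∂π = ∫ x, ψ x ∂π := by
    intro K ψ hK hψl
    have := hbindφ π hπ hπmom K ψ hK hψl
    rw [hπstat] at this
    exact this.symm
  have hstatk : ∀ (K : ℝ) (ψ : Vec d → ℝ), 0 ≤ K →
      (∀ x y : Vec d, |ψ x - ψ y| ≤ K * ‖x - y‖) → ∀ k,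
      ∫ x, T^[k] ψ x ∂π = ∫ x, ψ x ∂π := by
    intro K ψ hK hψl k
    induction k generalizing ψ K with
    | zero => simp
    | succ k ih =>
      simp_rw [Function.iterate_succ_apply]
      rw [ih (K * r) (T ψ) (mul_nonneg hK hr0) (hT_lip K ψ hK hψl)]
      exact hstat1 K ψ hK hψl
  -- convergence to the stationary mean
  set Mπ : ℝ := ∫ x, ‖x‖ ∂π with hMπdef
  have hnormint : Integrable (fun x : Vec d => ‖x‖) π := by
    refine ⟨measurable_norm.aestronglyMeasurable, ?_⟩
    rw [HasFiniteIntegral]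
    simpa [Real.enorm_eq_ofReal_abs, abs_of_nonneg (norm_nonneg _), ← hofR]
      using lt_top_iff_ne_top.2 hπmom
  have hMπ0 : 0 ≤ Mπ := integral_nonneg fun x => norm_nonneg x
  have hdistint : ∀ θ : Vec d, Integrable (fun x : Vec d => ‖θ - x‖) π := by
    intro θ
    refine Integrable.mono' ((integrable_const ‖θ‖).add hnormint)
      (measurable_const.sub measurable_id).norm.aestronglyMeasurable ?_
    filter_upwards with x
    simpa using norm_sub_le θ x
  have hdistbound : ∀ θ : Vec d, ∫ x, ‖θ - x‖ ∂π ≤ ‖θ‖ + Mπ := by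
    intro θ
    calc ∫ x, ‖θ - x‖ ∂π ≤ ∫ x, (‖θ‖ + ‖x‖) ∂π := by
          refine integral_mono (hdistint θ) ((integrable_const ‖θ‖).add hnormint) ?_
          intro x; simpa using norm_sub_le θ x
      _ = ‖θ‖ + Mπ := by
          rw [integral_add (integrable_const _) hnormint, integral_const]
          simp [hMπdef]
  have hconv : ∀ (K : ℝ) (ψ : Vec d → ℝ), 0 ≤ K →
      (∀ x y : Vec d, |ψ x - ψ y| ≤ K * ‖x - y‖) → ∀ k θ,
      |T^[k] ψ θ - ∫ x, ψ x ∂π| ≤ (K * r ^ k) * (‖θ‖ + Mπ) := by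
    intro K ψ hK hψl k θ
    have hl := hiterLip K ψ hK hψl k
    have hKk : 0 ≤ K * r ^ k := mul_nonneg hK (pow_nonneg hr0 k)
    have hTkint : Integrable (T^[k] ψ) π := (hlipIntAux π hπ hπmom (K * r ^ k) _ hKk hl).2
    have hrepr : T^[k] ψ θ - ∫ x, ψ x ∂π = ∫ x, (T^[k] ψ θ - T^[k] ψ x) ∂π := by
      rw [integral_sub (integrable_const _) hTkint, integral_const]
      simp [hstatk K ψ hK hψl k]
    rw [hrepr]
    have h1' : |∫ x, (T^[k] ψ θ - T^[k] ψ x) ∂π| ≤ ∫ x, |T^[k] ψ θ - T^[k] ψ x| ∂π := by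
      simpa [Real.norm_eq_abs] using norm_integral_le_integral_norm
        (μ := π) (f := fun x => T^[k] ψ θ - T^[k] ψ x)
    have h2' : ∫ x, |T^[k] ψ θ - T^[k] ψ x| ∂π ≤ ∫ x, (K * r ^ k) * ‖θ - x‖ ∂π := by
      refine integral_mono ((integrable_const _).sub hTkint).abs
        ((hdistint θ).const_mul _) fun x => hl θ x
    have h3' : ∫ x, (K * r ^ k) * ‖θ - x‖ ∂π ≤ (K * r ^ k) * (‖θ‖ + Mπ) := by
      rw [integral_const_mul]
      exact mul_le_mul_of_nonneg_left (hdistbound θ) hKk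
    exact h1'.trans (h2'.trans h3')
  -- the specific Lipschitz function φ
  set πφ : ℝ := ∫ ϑ, φ ϑ ∂π with hπφdef
  set Kφ : ℝ := max Lφ 0 with hKφdef
  have hKφ0 : 0 ≤ Kφ := le_max_right _ _
  have hφK : ∀ x y : Vec d, |φ x - φ y| ≤ Kφ * ‖x - y‖ := fun x y =>
    (hφ x y).trans (mul_le_mul_of_nonneg_right (le_max_left _ _) (norm_nonneg _))
  set aa : ℕ → Vec d → ℝ := fun i θ => T^[i] φ θ - πφ with haadef
  have habound : ∀ i (θ : Vec d), |aa i θ| ≤ (Kφ * (‖θ‖ + Mπ)) * r ^ i := by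
    intro i θ
    have h' := hconv Kφ φ hKφ0 hφK i θ
    calc |aa i θ| = |T^[i] φ θ - πφ| := rfl
      _ ≤ (Kφ * r ^ i) * (‖θ‖ + Mπ) := h'
      _ = (Kφ * (‖θ‖ + Mπ)) * r ^ i := by ring
  have hsum : ∀ θ, Summable fun i => aa i θ := by
    intro θ
    refine Summable.of_norm_bounded
      ((summable_geometric_of_lt_one hr0 hr1).mul_left (Kφ * (‖θ‖ + Mπ))) fun i => ?_
    simpa [Real.norm_eq_abs] using habound i θ
  have hterm : ∀ i (θ : Vec d),
      (∫ ϑ, φ ϑ ∂(Riter P f' ε γ i θ)) - ∫ ϑ, φ ϑ ∂π = aa i θ := by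
    intro i θ
    rw [hiter Kφ φ hKφ0 hφK i θ]
  have hψeq : poisson P f' ε γ π φ = fun θ => ∑' i, aa i θ := by
    funext θ
    exact tsum_congr fun i => hterm i θ
  -- Lipschitz property of ψ
  have hTiterm : ∀ i (x y : Vec d), |aa i x - aa i y| ≤ (Kφ * r ^ i) * ‖x - y‖ := by
    intro i x y
    have he : aa i x - aa i y = T^[i] φ x - T^[i] φ y := by simp only [haadef]; ring
    rw [he]
    exact hiterLip Kφ φ hKφ0 hφK i x y
  set Kψ : ℝ := Kφ * (1 - r)⁻¹ with hKψdef
  have hinv0 : 0 ≤ (1 - r)⁻¹ := inv_nonneg.2 (by linarith)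
  have hKψ0 : 0 ≤ Kψ := mul_nonneg hKφ0 hinv0
  have hψLip : ∀ x y : Vec d,
      |poisson P f' ε γ π φ x - poisson P f' ε γ π φ y| ≤ Kψ * ‖x - y‖ := by
    intro x y
    rw [hψeq]
    have hsummand : Summable fun i => |aa i x - aa i y| := by
      refine Summable.of_nonneg_of_le (fun i => abs_nonneg _) (fun i => ?_)
        ((summable_geometric_of_lt_one hr0 hr1).mul_left (Kφ * ‖x - y‖))
      calc |aa i x - aa i y| ≤ (Kφ * r ^ i) * ‖x - y‖ := hTiterm i x y
        _ = (Kφ * ‖x - y‖) * r ^ i := by ring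
    calc |(∑' i, aa i x) - ∑' i, aa i y| = |∑' i, (aa i x - aa i y)| := by
          rw [Summable.tsum_sub (hsum x) (hsum y)]
      _ ≤ ∑' i, |aa i x - aa i y| := by
          simpa [Real.norm_eq_abs] using
            norm_tsum_le_tsum_norm (f := fun i => aa i x - aa i y) hsummand
      _ ≤ ∑' i, (Kφ * ‖x - y‖) * r ^ i := by
          refine Summable.tsum_le_tsum (fun i => ?_) hsummand
            ((summable_geometric_of_lt_one hr0 hr1).mul_left (Kφ * ‖x - y‖))
          calc |aa i x - aa i y| ≤ (Kφ * r ^ i) * ‖x - y‖ := hTiterm i x y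
            _ = (Kφ * ‖x - y‖) * r ^ i := by ring
      _ = (Kφ * ‖x - y‖) * (1 - r)⁻¹ := by
          rw [tsum_mul_left, tsum_geometric_of_lt_one hr0 hr1]
      _ = Kψ * ‖x - y‖ := by rw [hKψdef]; ring
  have hψcont : Continuous (poisson P f' ε γ π φ) := lipCont hKψ0 hψLip
  -- ENNReal geometric machinery
  set q : ℝ≥0∞ := ENNReal.ofReal r with hqdef
  have hq1 : q < 1 := by rw [hqdef]; exact ENNReal.ofReal_lt_one.2 hr1
  have hgeo : ∀ C E : ℝ≥0∞, C ≠ ⊤ → E ≠ ⊤ → ∑' i : ℕ, (C * q ^ i) * E ≠ ⊤ := by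
    intro C E hC hE
    have : ∀ i : ℕ, (C * q ^ i) * E = (C * E) * q ^ i := fun i => by ring
    rw [tsum_congr this, ENNReal.tsum_mul_left, ENNReal.tsum_geometric]
    refine ENNReal.mul_ne_top (ENNReal.mul_ne_top hC hE) (ENNReal.inv_ne_top.2 ?_)
    intro h0
    exact absurd (tsub_eq_zero_iff_le.1 h0) (not_le.2 hq1)
  have haabound' : ∀ i (v : Vec d), (‖aa i v‖₊ : ℝ≥0∞)
      ≤ (ENNReal.ofReal Kφ * q ^ i) * ENNReal.ofReal (‖v‖ + Mπ) := by
    intro i v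
    rw [(enorm_eq_nnnorm (aa i v)).symm, Real.enorm_eq_ofReal_abs]
    calc ENNReal.ofReal |aa i v| ≤ ENNReal.ofReal ((Kφ * r ^ i) * (‖v‖ + Mπ)) := by
          refine ENNReal.ofReal_le_ofReal ?_
          have := habound i v
          linarith [this]
      _ = (ENNReal.ofReal Kφ * q ^ i) * ENNReal.ofReal (‖v‖ + Mπ) := by
          rw [ENNReal.ofReal_mul (by positivity), ENNReal.ofReal_mul hKφ0,
            ENNReal.ofReal_pow hr0, hqdef]
  have haacont : ∀ i, Continuous (aa i) := by
    intro i
    have : Continuous (T^[i] φ) :=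
      lipCont (mul_nonneg hKφ0 (pow_nonneg hr0 i)) (hiterLip Kφ φ hKφ0 hφK i)
    exact this.sub continuous_const
  -- conclusion 3: the Poisson equation
  have hpois : ∀ θ : Vec d,
      poisson P f' ε γ π φ θ - (∫ ϑ, poisson P f' ε γ π φ ϑ ∂(Rstep P f' ε γ θ))
        = φ θ - πφ := by
    intro θ
    have hEθ : ∫⁻ ω, ENNReal.ofReal (‖g ω θ‖ + Mπ) ∂P ≠ ⊤ := by
      have hb : ∀ᵐ ω ∂P, ENNReal.ofReal (‖g ω θ‖ + Mπ)
          ≤ ENNReal.ofReal (‖θ‖ + 2 * ‖θstar‖ + Mπ)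
            + ENNReal.ofReal γ * (‖ε 1 θstar ω‖₊ : ℝ≥0∞) := by
        filter_upwards [hNae] with ω hω
        calc ENNReal.ofReal (‖g ω θ‖ + Mπ)
            ≤ ENNReal.ofReal ((‖θ‖ + 2 * ‖θstar‖ + Mπ) + γ * ‖ε 1 θstar ω‖) :=
              ENNReal.ofReal_le_ofReal (by have := hgbound θ ω hω; linarith)
          _ ≤ ENNReal.ofReal (‖θ‖ + 2 * ‖θstar‖ + Mπ) + ENNReal.ofReal (γ * ‖ε 1 θstar ω‖) :=
              ENNReal.ofReal_add_le
          _ = ENNReal.ofReal (‖θ‖ + 2 * ‖θstar‖ + Mπ)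
              + ENNReal.ofReal γ * (‖ε 1 θstar ω‖₊ : ℝ≥0∞) := by
              rw [ENNReal.ofReal_mul hγ0.le, hofR]
      refine ne_top_of_le_ne_top ?_ (lintegral_mono_ae hb)
      have hmε : Measurable fun ω => (‖ε 1 θstar ω‖₊ : ℝ≥0∞) :=
        (hεm θstar).nnnorm.coe_nnreal_ennreal
      rw [lintegral_add_left measurable_const, lintegral_const_mul _ hmε, lintegral_const,
        measure_univ, mul_one]
      exact ENNReal.add_ne_top.2 ⟨ENNReal.ofReal_ne_top,
        ENNReal.mul_ne_top ENNReal.ofReal_ne_top hε1fin.ne⟩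
    have hmeasi : ∀ i, AEStronglyMeasurable (fun ω => aa i (g ω θ)) P := fun i =>
      ((haacont i).measurable.comp (hgm θ)).aestronglyMeasurable
    have hlsum : ∑' i, ∫⁻ ω, (‖aa i (g ω θ)‖₊ : ℝ≥0∞) ∂P ≠ ⊤ := by
      refine ne_top_of_le_ne_top (hgeo (ENNReal.ofReal Kφ) _ ENNReal.ofReal_ne_top hEθ)
        (ENNReal.tsum_le_tsum fun i => ?_)
      calc ∫⁻ ω, (‖aa i (g ω θ)‖₊ : ℝ≥0∞) ∂P
          ≤ ∫⁻ ω, (ENNReal.ofReal Kφ * q ^ i) * ENNReal.ofReal (‖g ω θ‖ + Mπ) ∂P :=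
            lintegral_mono fun ω => haabound' i (g ω θ)
        _ = (ENNReal.ofReal Kφ * q ^ i) * ∫⁻ ω, ENNReal.ofReal (‖g ω θ‖ + Mπ) ∂P :=
            lintegral_const_mul' _ _ (ENNReal.mul_ne_top ENNReal.ofReal_ne_top
              (ENNReal.pow_ne_top (hq1.trans_le le_top).ne))
    have hswap : ∫ ω, (∑' i, aa i (g ω θ)) ∂P = ∑' i, ∫ ω, aa i (g ω θ) ∂P :=
      integral_tsum hmeasi hlsum
    have hTa : ∀ i, ∫ ω, aa i (g ω θ) ∂P = aa (i+1) θ := by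
      intro i
      have hiK : 0 ≤ Kφ * r ^ i := mul_nonneg hKφ0 (pow_nonneg hr0 i)
      have hint : Integrable (fun ω => T^[i] φ (g ω θ)) P :=
        hcomp_int (Kφ * r ^ i) (T^[i] φ) hiK (hiterLip Kφ φ hKφ0 hφK i) θ
      have he : (fun ω => aa i (g ω θ)) = fun ω => T^[i] φ (g ω θ) - πφ := by
        funext ω; simp only [haadef]
      rw [he, integral_sub hint (integrable_const _), integral_const, probReal_univ,
        ← hTmap (T^[i] φ) (lipCont hiK (hiterLip Kφ φ hKφ0 hφK i)) θ]
      simp only [haadef, Function.iterate_succ_apply']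
      simp
    have hkey : T (poisson P f' ε γ π φ) θ = (∑' i, aa i θ) - (φ θ - πφ) := by
      have h1' : (fun ω => poisson P f' ε γ π φ (g ω θ))
          = fun ω => ∑' i, aa i (g ω θ) := by
        funext ω; rw [hψeq]
      rw [hTmap _ hψcont θ, h1', hswap, tsum_congr hTa]
      have htail := Summable.tsum_eq_zero_add (hsum θ)
      have ha0 : aa 0 θ = φ θ - πφ := by simp [haadef]
      linarith [htail]
    have hψθ : poisson P f' ε γ π φ θ = ∑' i, aa i θ := by rw [hψeq]
    show poisson P f' ε γ π φ θ - T (poisson P f' ε γ π φ) θ = φ θ - πφ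
    rw [hkey, hψθ]
    ring
  -- conclusion 4: π(ψ) = 0
  have hEπ : ∫⁻ x, ENNReal.ofReal (‖x‖ + Mπ) ∂π ≠ ⊤ := by
    have hb : ∀ x : Vec d, ENNReal.ofReal (‖x‖ + Mπ)
        ≤ (‖x‖₊ : ℝ≥0∞) + ENNReal.ofReal Mπ := fun x => by
      calc ENNReal.ofReal (‖x‖ + Mπ) ≤ ENNReal.ofReal ‖x‖ + ENNReal.ofReal Mπ :=
            ENNReal.ofReal_add_le
        _ = (‖x‖₊ : ℝ≥0∞) + ENNReal.ofReal Mπ := by rw [hofR]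
    refine ne_top_of_le_ne_top ?_ (lintegral_mono hb)
    rw [lintegral_add_right _ measurable_const, lintegral_const, measure_univ, mul_one]
    exact ENNReal.add_ne_top.2 ⟨hπmom, ENNReal.ofReal_ne_top⟩
  have hπψ : ∫ θ, poisson P f' ε γ π φ θ ∂π = 0 := by
    rw [hψeq]
    have hmeasi : ∀ i, AEStronglyMeasurable (aa i) π := fun i =>
      (haacont i).measurable.aestronglyMeasurable
    have hlsum : ∑' i, ∫⁻ x, (‖aa i x‖₊ : ℝ≥0∞) ∂π ≠ ⊤ := by
      refine ne_top_of_le_ne_top (hgeo (ENNReal.ofReal Kφ) _ ENNReal.ofReal_ne_top hEπ)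
        (ENNReal.tsum_le_tsum fun i => ?_)
      calc ∫⁻ x, (‖aa i x‖₊ : ℝ≥0∞) ∂π
          ≤ ∫⁻ x, (ENNReal.ofReal Kφ * q ^ i) * ENNReal.ofReal (‖x‖ + Mπ) ∂π :=
            lintegral_mono fun x => haabound' i x
        _ = (ENNReal.ofReal Kφ * q ^ i) * ∫⁻ x, ENNReal.ofReal (‖x‖ + Mπ) ∂π :=
            lintegral_const_mul' _ _ (ENNReal.mul_ne_top ENNReal.ofReal_ne_top
              (ENNReal.pow_ne_top (hq1.trans_le le_top).ne))
    rw [integral_tsum hmeasi hlsum]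
    have hzero : ∀ i, ∫ x, aa i x ∂π = 0 := by
      intro i
      have hiK : 0 ≤ Kφ * r ^ i := mul_nonneg hKφ0 (pow_nonneg hr0 i)
      have hint : Integrable (T^[i] φ) π :=
        (hlipIntAux π hπ hπmom (Kφ * r ^ i) _ hiK (hiterLip Kφ φ hKφ0 hφK i)).2
      have he : aa i = fun x => T^[i] φ x - πφ := rfl
      rw [he, integral_sub hint (integrable_const _), integral_const, probReal_univ,
        hstatk Kφ φ hKφ0 hφK i]
      simp [hπφdef]
    simp [hzero]
  refine ⟨?_, ⟨Kψ, hψLip⟩, hpois, hπψ, ?_⟩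
  · intro θ
    exact (hsum θ).congr fun i => (hterm i θ).symm
  -- conclusion 5: uniqueness
  intro ψ' hψ'lipEx hψ'pe hψ'zero
  obtain ⟨K', hK'⟩ := hψ'lipEx
  set K'' : ℝ := max K' 0 with hK''def
  have hK''0 : 0 ≤ K'' := le_max_right _ _
  have hψ'lip : ∀ x y : Vec d, |ψ' x - ψ' y| ≤ K'' * ‖x - y‖ := fun x y =>
    (hK' x y).trans (mul_le_mul_of_nonneg_right (le_max_left _ _) (norm_nonneg _))
  set h : Vec d → ℝ := fun θ => ψ' θ - poisson P f' ε γ π φ θ with hhdef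
  have hKh0 : 0 ≤ K'' + Kψ := add_nonneg hK''0 hKψ0
  have hhlip : ∀ x y : Vec d, |h x - h y| ≤ (K'' + Kψ) * ‖x - y‖ := by
    intro x y
    have he : h x - h y = (ψ' x - ψ' y) - (poisson P f' ε γ π φ x - poisson P f' ε γ π φ y) := by
      simp only [hhdef]; ring
    rw [he]
    calc |(ψ' x - ψ' y) - (poisson P f' ε γ π φ x - poisson P f' ε γ π φ y)|
        ≤ |ψ' x - ψ' y| + |poisson P f' ε γ π φ x - poisson P f' ε γ π φ y| := by
          rw [sub_eq_add_neg]
          exact (abs_add_le _ _).trans (by rw [abs_neg])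
      _ ≤ K'' * ‖x - y‖ + Kψ * ‖x - y‖ := add_le_add (hψ'lip x y) (hψLip x y)
      _ = (K'' + Kψ) * ‖x - y‖ := by ring
  have hRθmom : ∀ θ, ∫⁻ x, (‖x‖₊ : ℝ≥0∞) ∂(Rstep P f' ε γ θ) ≠ ⊤ := fun θ =>
    ne_top_of_le_ne_top (ENNReal.add_ne_top.2 ⟨ENNReal.coe_ne_top, hCmomfin⟩) (hRstepmom θ)
  have hTh : ∀ θ, T h θ = T ψ' θ - T (poisson P f' ε γ π φ) θ := by
    intro θ
    have hint1 : Integrable ψ' (Rstep P f' ε γ θ) :=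
      (hlipIntAux _ (hRprob θ) (hRθmom θ) K'' ψ' hK''0 hψ'lip).2
    have hint2 : Integrable (poisson P f' ε γ π φ) (Rstep P f' ε γ θ) :=
      (hlipIntAux _ (hRprob θ) (hRθmom θ) Kψ _ hKψ0 hψLip).2
    simp only [hTdef, hhdef]
    exact integral_sub hint1 hint2
  have hfix : T h = h := by
    funext θ
    have h1' := hψ'pe θ
    have h2' := hpois θ
    have h3' := hTh θ
    have h4' : T ψ' θ = ∫ ϑ, ψ' ϑ ∂(Rstep P f' ε γ θ) := rfl
    have h5' : T (poisson P f' ε γ π φ) θ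
        = ∫ ϑ, poisson P f' ε γ π φ ϑ ∂(Rstep P f' ε γ θ) := rfl
    simp only [hhdef]
    rw [h3', h4', h5']
    linarith
  have hiterfix : ∀ k θ, T^[k] h θ = h θ := by
    intro k
    induction k with
    | zero => intro θ; simp
    | succ k ih =>
      intro θ
      rw [Function.iterate_succ_apply, hfix]
      exact ih θ
  have hπh : ∫ x, h x ∂π = 0 := by
    have hint1 : Integrable ψ' π := (hlipIntAux π hπ hπmom K'' ψ' hK''0 hψ'lip).2
    have hint2 : Integrable (poisson P f' ε γ π φ) π :=
      (hlipIntAux π hπ hπmom Kψ _ hKψ0 hψLip).2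
    simp only [hhdef]
    rw [integral_sub hint1 hint2, hψ'zero, hπψ]
    ring
  have hzero : ∀ θ, h θ = 0 := by
    intro θ
    have hb : ∀ k : ℕ, |h θ| ≤ (((K'' + Kψ) * (‖θ‖ + Mπ))) * r ^ k := by
      intro k
      have h' := hconv (K'' + Kψ) h hKh0 hhlip k θ
      rw [hiterfix k θ, hπh, sub_zero] at h'
      calc |h θ| ≤ ((K'' + Kψ) * r ^ k) * (‖θ‖ + Mπ) := h'
        _ = (((K'' + Kψ) * (‖θ‖ + Mπ))) * r ^ k := by ring
    have hlim : Tendsto (fun k : ℕ => (((K'' + Kψ) * (‖θ‖ + Mπ))) * r ^ k) atTop (𝓝 0) := by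
      simpa using (tendsto_pow_atTop_nhds_zero_of_lt_one hr0 hr1).const_mul
        ((K'' + Kψ) * (‖θ‖ + Mπ))
    have hle0' : |h θ| ≤ 0 := ge_of_tendsto' hlim hb
    exact abs_eq_zero.1 (le_antisymm hle0' (abs_nonneg _))
  funext θ
  have := hzero θ
  simp only [hhdef] at this
  linarith

end SGDFormal
end
end
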